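/- arXiv:1002.1591 — 5 statements merged into one kernel-verified Lean document; each statement's English description precedes it below -/
import Mathlib

section
/- Suppose $\Psi$ is $C^2$ on $[0,1]$ with $\Psi(1) = \Psi'(1) = 1$, let $F(\eta) = \Psi(\eta^2) - \eta^2$ satisfy $F > 0$ on $(-1,1)$, let $\beta > 0$, and let $u \in \mathcal{M}$ be a minimizer of $\mathcal{E}(u) = \sum_j F(u_j) + \beta\sum_j(u_{j+1}-u_j)^2$ over $\mathcal{M}$. Then there is no index $j_0$ such that $u_{j_0-1} < 1$ and $u_j = 1$ for all $j \geq j_0$; consequently $u_j < 1$ for all $j \in \mathbb{Z}$ (and by oddness $u_j > -1$ for all $j$). -/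
open Filter
open scoped ENNReal

/-- the set `𝓜` of odd, nondecreasing profiles with values in `[-1,1]`. -/
def IsM (u : ℤ → ℝ) : Prop :=
  (∀ j, u (-j) = - u j) ∧ Monotone u ∧ ∀ j, u j ∈ Set.Icc (-1 : ℝ) 1

/-- the energy functional `𝓔(u) = ∑ F(u_j) + β ∑ (u_{j+1}-u_j)²` with values in `[0,∞]`. -/
noncomputable def energy (F : ℝ → ℝ) (β : ℝ) (u : ℤ → ℝ) : ℝ≥0∞ :=
  (∑' j : ℤ, ENNReal.ofReal (F (u j))) +
    ENNReal.ofReal β * ∑' j : ℤ, ENNReal.ofReal ((u (j + 1) - u j) ^ 2)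

set_option maxHeartbeats 2000000 in
/-- a minimizer of the energy has no terminal plateau at `1`;
consequently `-1 < u_j < 1` for all `j`. -/
theorem stmt4 (Ψ : ℝ → ℝ) (β : ℝ) (hβ : 0 < β)
    (hΨ : ContDiffOn ℝ 2 Ψ (Set.Icc (0 : ℝ) 1))
    (hΨ1 : Ψ 1 = 1) (hΨ'1 : derivWithin Ψ (Set.Icc (0 : ℝ) 1) 1 = 1)
    (F : ℝ → ℝ) (hFdef : ∀ η, F η = Ψ (η ^ 2) - η ^ 2)
    (hFpos : ∀ η ∈ Set.Ioo (-1 : ℝ) 1, 0 < F η)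
    (u : ℤ → ℝ) (hu : IsM u)
    (hmin : ∀ v : ℤ → ℝ, IsM v → energy F β u ≤ energy F β v) :
    (¬ ∃ j0 : ℤ, u (j0 - 1) < 1 ∧ ∀ j : ℤ, j0 ≤ j → u j = 1) ∧
      (∀ j : ℤ, u j < 1 ∧ -1 < u j) := by
  classical
  obtain ⟨hodd, hmono, hrange⟩ := hu
  have hu0 : u 0 = 0 := by have h := hodd 0; simp only [neg_zero] at h; linarith
  have hF1 : F 1 = 0 := by rw [hFdef]; norm_num [hΨ1]
  have hFm1 : F (-1) = 0 := by rw [hFdef]; norm_num [hΨ1]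
  have hFeven : ∀ η : ℝ, F (-η) = F η := by
    intro η; rw [hFdef, hFdef, neg_pow]; norm_num
  have hFnonneg : ∀ η : ℝ, -1 ≤ η → η ≤ 1 → 0 ≤ F η := by
    intro η h1 h2
    rcases eq_or_lt_of_le h1 with h | h
    · rw [← h, hFm1]
    · rcases eq_or_lt_of_le h2 with h' | h'
      · rw [h', hF1]
      · exact (hFpos η ⟨h, h'⟩).le
  -- derivative of F at 1 within [0,1] is 0
  have hF' : HasDerivWithinAt F 0 (Set.Icc (0:ℝ) 1) 1 := by
    have hΨdiff : DifferentiableOn ℝ Ψ (Set.Icc (0:ℝ) 1) := hΨ.differentiableOn (by norm_num)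
    have hΨ'' : HasDerivWithinAt Ψ 1 (Set.Icc (0:ℝ) 1) 1 := by
      have h := (hΨdiff 1 (by norm_num)).hasDerivWithinAt
      rwa [hΨ'1] at h
    have hsq : HasDerivWithinAt (fun η : ℝ => η ^ 2) 2 (Set.Icc (0:ℝ) 1) 1 := by
      have h := (hasDerivAt_pow 2 (1:ℝ)).hasDerivWithinAt (s := Set.Icc (0:ℝ) 1)
      exact h.congr_deriv (by norm_num)
    have hmaps : Set.MapsTo (fun η : ℝ => η ^ 2) (Set.Icc (0:ℝ) 1) (Set.Icc (0:ℝ) 1) := by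
      intro z hz
      simp only [Set.mem_Icc] at hz ⊢
      constructor
      · positivity
      · nlinarith [hz.1, hz.2]
    have hcomp := hΨ''.comp_of_eq (x := (1:ℝ)) hsq hmaps (by norm_num)
    have h := hcomp.sub hsq
    have hFfun : F = fun η : ℝ => Ψ (η ^ 2) - η ^ 2 := funext hFdef
    rw [hFfun]
    exact h.congr_deriv (by norm_num)
  have main : ¬ ∃ j0 : ℤ, u (j0 - 1) < 1 ∧ ∀ j : ℤ, j0 ≤ j → u j = 1 := by
    rintro ⟨j0, ha, hpl⟩
    set a := u (j0 - 1) with ha_def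
    have hj0 : 1 ≤ j0 := by
      by_contra h
      push_neg at h
      have h1 := hpl 0 (by omega)
      rw [hu0] at h1; norm_num at h1
    have ha0 : 0 ≤ a := by
      have h := hmono (show (0:ℤ) ≤ j0 - 1 by omega)
      rwa [hu0] at h
    have hule : ∀ j : ℤ, j ≤ -j0 → u j = -1 := by
      intro j hj
      have h1 : u (-j) = 1 := hpl (-j) (by omega)
      have h2 := hodd (-j)
      rw [neg_neg] at h2
      rw [h2, h1]
    -- choose x
    clear_value a
    set ε := β * (1 - a) with hε_def
    have hε : 0 < ε := by
      apply mul_pos hβ; linarith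
    clear_value ε
    set m := (1 + a) / 2 with hm_def
    clear_value m
    have hm1 : m < 1 := by rw [hm_def]; linarith
    have hslope := hasDerivWithinAt_iff_tendsto_slope.mp hF'
    have hsub : Set.Ioo m 1 ⊆ Set.Icc (0:ℝ) 1 \ {1} := by
      intro z hz
      constructor
      · constructor
        · have : (0:ℝ) ≤ m := by rw [hm_def]; linarith
          linarith [hz.1]
        · linarith [hz.2]
      · simp only [Set.mem_singleton_iff]; intro h; rw [h] at hz; exact lt_irrefl 1 hz.2
    have h2 : Tendsto (slope F 1) (nhdsWithin 1 (Set.Ioo m 1)) (nhds 0) :=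
      hslope.mono_left (nhdsWithin_mono _ hsub)
    have h4 : ∀ᶠ z in nhdsWithin 1 (Set.Ioo m 1), -ε < slope F 1 z :=
      h2.eventually (eventually_gt_nhds (by linarith))
    have h5 : ∀ᶠ z in nhdsWithin 1 (Set.Ioo m 1), z ∈ Set.Ioo m 1 :=
      eventually_mem_nhdsWithin
    haveI : (nhdsWithin (1:ℝ) (Set.Ioo m 1)).NeBot := by
      rw [nhdsWithin_Ioo_eq_nhdsLT hm1]; infer_instance
    obtain ⟨x, hx1, hx2⟩ := (h4.and h5).exists
    have hxm : m < x := hx2.1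
    have hx_lt1 : x < 1 := hx2.2
    have hax : a < x := by rw [hm_def] at hxm; linarith
    have hx0 : 0 ≤ x := by rw [hm_def] at hxm; linarith
    have hFx : F x < ε * (1 - x) := by
      rw [slope_def_field, hF1, sub_zero] at hx1
      have h := (lt_div_iff_of_neg (show x - 1 < 0 by linarith)).mp hx1
      nlinarith
    -- the competitor
    set v : ℤ → ℝ := fun j => if j = j0 then x else if j = -j0 then -x else u j with hv_def
    clear_value v
    have hvj0 : v j0 = x := by simp [hv_def]
    have hvnj0 : v (-j0) = -x := by
      simp [hv_def, show ¬(-j0 = j0) by omega]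
    have hvother : ∀ j : ℤ, j ≠ j0 → j ≠ -j0 → v j = u j := by
      intro j h1 h2; simp only [hv_def]; rw [if_neg h1, if_neg h2]
    have hvM : IsM v := by
      refine ⟨?_, ?_, ?_⟩
      · intro j
        by_cases h1 : j = j0
        · rw [h1, hvnj0, hvj0]
        · by_cases h2 : j = -j0
          · rw [h2, neg_neg, hvj0, hvnj0, neg_neg]
          · rw [hvother j h1 h2, hvother (-j) (by omega) (by omega), hodd]
      · apply monotone_int_of_le_succ
        intro j
        by_cases h1 : j = j0 - 1
        · rw [h1, show j0 - 1 + 1 = j0 by ring, hvj0,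
            hvother _ (by omega) (by omega), ← ha_def]
          exact le_of_lt hax
        · by_cases h2 : j = j0
          · rw [h2, hvj0, hvother _ (by omega) (by omega), hpl (j0+1) (by omega)]
            linarith
          · by_cases h3 : j = -j0 - 1
            · rw [h3, show -j0 - 1 + 1 = -j0 by ring, hvnj0,
                hvother _ (by omega) (by omega), hule _ (by omega)]
              linarith
            · by_cases h4 : j = -j0
              · rw [h4, hvnj0, hvother _ (by omega) (by omega)]
                have huval : u (-j0 + 1) = -a := by
                  have h := hodd (j0 - 1)
                  rw [show -(j0-1) = -j0 + 1 by ring] at h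
                  rw [h, ← ha_def]
                rw [huval]; linarith
              · rw [hvother _ h2 h4, hvother _ (by omega) (by omega)]
                exact hmono (by omega)
      · intro j
        by_cases h1 : j = j0
        · rw [h1, hvj0]; constructor <;> linarith
        · by_cases h2 : j = -j0
          · rw [h2, hvnj0]; constructor <;> linarith
          · rw [hvother _ h1 h2]; exact hrange j
    obtain ⟨hvodd, hvmono, hvrange⟩ := hvM
    -- finite sums
    set s1 : Finset ℤ := Finset.Icc (-j0) j0 with hs1_def
    set s2 : Finset ℤ := Finset.Icc (-j0 - 1) j0 with hs2_def
    clear_value s1 s2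
    have hout1 : ∀ j : ℤ, j ∉ s1 → (u j = 1 ∨ u j = -1) := by
      intro j hj
      rw [hs1_def, Finset.mem_Icc] at hj
      push_neg at hj
      by_cases h : j0 ≤ j
      · exact Or.inl (hpl j h)
      · exact Or.inr (hule j (by omega))
    have hfu : ∀ j : ℤ, j ∉ s1 → ENNReal.ofReal (F (u j)) = 0 := by
      intro j hj
      rcases hout1 j hj with h | h <;> rw [h] <;> simp [hF1, hFm1]
    have hfv : ∀ j : ℤ, j ∉ s1 → ENNReal.ofReal (F (v j)) = 0 := by
      intro j hj
      have hj' : j ≠ j0 ∧ j ≠ -j0 := by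
        rw [hs1_def, Finset.mem_Icc] at hj; push_neg at hj; omega
      rw [hvother _ hj'.1 hj'.2]; exact hfu j hj
    have huconst : ∀ j : ℤ, j ∉ s2 → u (j + 1) = u j := by
      intro j hj
      rw [hs2_def, Finset.mem_Icc] at hj
      push_neg at hj
      by_cases h : j0 ≤ j
      · rw [hpl j h, hpl (j+1) (by omega)]
      · rw [hule j (by omega), hule (j+1) (by omega)]
    have hgu : ∀ j : ℤ, j ∉ s2 → ENNReal.ofReal ((u (j + 1) - u j) ^ 2) = 0 := by
      intro j hj; rw [huconst j hj]; simp
    have hgv : ∀ j : ℤ, j ∉ s2 → ENNReal.ofReal ((v (j + 1) - v j) ^ 2) = 0 := by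
      intro j hj
      have hj' := hj
      rw [hs2_def, Finset.mem_Icc] at hj'
      push_neg at hj'
      rw [hvother j (by omega) (by omega), hvother (j+1) (by omega) (by omega)]
      exact hgu j hj
    -- real sums
    set Su := ∑ j ∈ s1, F (u j) with hSu_def
    set Sv := ∑ j ∈ s1, F (v j) with hSv_def
    set Tu := ∑ j ∈ s2, (u (j + 1) - u j) ^ 2 with hTu_def
    set Tv := ∑ j ∈ s2, (v (j + 1) - v j) ^ 2 with hTv_def
    clear_value Su Sv Tu Tv
    have hSu_nonneg : 0 ≤ Su := by
      rw [hSu_def]; exact Finset.sum_nonneg fun j _ => hFnonneg _ (hrange j).1 (hrange j).2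
    have hSv_nonneg : 0 ≤ Sv := by
      rw [hSv_def]; exact Finset.sum_nonneg fun j _ => hFnonneg _ (hvrange j).1 (hvrange j).2
    have hTu_nonneg : 0 ≤ Tu := by
      rw [hTu_def]; exact Finset.sum_nonneg fun j _ => sq_nonneg _
    have hTv_nonneg : 0 ≤ Tv := by
      rw [hTv_def]; exact Finset.sum_nonneg fun j _ => sq_nonneg _
    have heu : energy F β u = ENNReal.ofReal (Su + β * Tu) := by
      rw [energy, tsum_eq_sum hfu, tsum_eq_sum hgu,
        ENNReal.ofReal_add hSu_nonneg (mul_nonneg hβ.le hTu_nonneg),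
        ENNReal.ofReal_mul hβ.le, hSu_def, hTu_def,
        ENNReal.ofReal_sum_of_nonneg (fun j _ => hFnonneg _ (hrange j).1 (hrange j).2),
        ENNReal.ofReal_sum_of_nonneg (fun j _ => sq_nonneg _)]
    have hev : energy F β v = ENNReal.ofReal (Sv + β * Tv) := by
      rw [energy, tsum_eq_sum hfv, tsum_eq_sum hgv,
        ENNReal.ofReal_add hSv_nonneg (mul_nonneg hβ.le hTv_nonneg),
        ENNReal.ofReal_mul hβ.le, hSv_def, hTv_def,
        ENNReal.ofReal_sum_of_nonneg (fun j _ => hFnonneg _ (hvrange j).1 (hvrange j).2),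
        ENNReal.ofReal_sum_of_nonneg (fun j _ => sq_nonneg _)]
    -- compute Sv in terms of Su
    have hSv : Sv = Su + 2 * F x := by
      have hpt : ∀ j ∈ s1, F (v j) = F (u j)
          + ((if j = j0 then F x else 0) + (if j = -j0 then F x else 0)) := by
        intro j _
        by_cases h1 : j = j0
        · rw [h1, hvj0, if_pos rfl, if_neg (by omega), hpl j0 le_rfl, hF1]
          ring
        · by_cases h2 : j = -j0
          · rw [h2, hvnj0, if_neg (by omega), if_pos rfl, hule (-j0) le_rfl, hFm1,
              hFeven]
            ring
          · rw [hvother _ h1 h2, if_neg h1, if_neg h2]; ring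
      rw [hSv_def, Finset.sum_congr rfl hpt, Finset.sum_add_distrib,
        Finset.sum_add_distrib, Finset.sum_ite_eq', Finset.sum_ite_eq',
        if_pos (by rw [hs1_def, Finset.mem_Icc]; omega),
        if_pos (by rw [hs1_def, Finset.mem_Icc]; omega), ← hSu_def]
      ring
    -- compute Tv in terms of Tu
    have hTv : Tv = Tu + 2 * ((x - a) ^ 2 - (1 - a) ^ 2) + 2 * (1 - x) ^ 2 := by
      have hpt : ∀ j ∈ s2, (v (j + 1) - v j) ^ 2 = (u (j + 1) - u j) ^ 2
          + ((if j = j0 - 1 then (x - a) ^ 2 - (1 - a) ^ 2 else 0)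
            + (if j = j0 then (1 - x) ^ 2 else 0)
            + (if j = -j0 - 1 then (1 - x) ^ 2 else 0)
            + (if j = -j0 then (x - a) ^ 2 - (1 - a) ^ 2 else 0)) := by
        intro j _
        by_cases h1 : j = j0 - 1
        · rw [h1, show j0 - 1 + 1 = j0 by ring, hvj0, hvother _ (by omega) (by omega),
            if_pos rfl, if_neg (by omega), if_neg (by omega), if_neg (by omega),
            hpl j0 le_rfl, ← ha_def]
          ring
        · by_cases h2 : j = j0
          · rw [h2, hvj0, hvother _ (by omega) (by omega), if_neg (by omega),
              if_pos rfl, if_neg (by omega), if_neg (by omega),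
              hpl j0 le_rfl, hpl (j0 + 1) (by omega)]
            ring
          · by_cases h3 : j = -j0 - 1
            · rw [h3, show -j0 - 1 + 1 = -j0 by ring, hvnj0,
                hvother _ (by omega) (by omega), if_neg (by omega), if_neg (by omega),
                if_pos rfl, if_neg (by omega), hule (-j0) le_rfl,
                hule (-j0 - 1) (by omega)]
              ring
            · by_cases h4 : j = -j0
              · have hup : u (-j0 + 1) = -a := by
                  have h := hodd (j0 - 1)
                  rw [show -(j0-1) = -j0 + 1 by ring] at h
                  rw [h, ← ha_def]
                rw [h4, hvnj0, hvother _ (by omega) (by omega), if_neg (by omega),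
                  if_neg (by omega), if_neg (by omega), if_pos rfl, hup,
                  hule (-j0) le_rfl]
                ring
              · rw [hvother _ h2 h4, hvother _ (by omega) (by omega),
                  if_neg h1, if_neg h2, if_neg h3, if_neg h4]
                ring
      rw [hTv_def, Finset.sum_congr rfl hpt, Finset.sum_add_distrib,
        Finset.sum_add_distrib, Finset.sum_add_distrib, Finset.sum_add_distrib,
        Finset.sum_ite_eq', Finset.sum_ite_eq', Finset.sum_ite_eq', Finset.sum_ite_eq',
        if_pos (by rw [hs2_def, Finset.mem_Icc]; omega),
        if_pos (by rw [hs2_def, Finset.mem_Icc]; omega),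
        if_pos (by rw [hs2_def, Finset.mem_Icc]; omega),
        if_pos (by rw [hs2_def, Finset.mem_Icc]; omega), ← hTu_def]
      ring
    -- contradiction with minimality
    have hle := hmin v ⟨hvodd, hvmono, hvrange⟩
    rw [heu, hev] at hle
    have hle' : Su + β * Tu ≤ Sv + β * Tv :=
      (ENNReal.ofReal_le_ofReal_iff
        (add_nonneg hSv_nonneg (mul_nonneg hβ.le hTv_nonneg))).mp hle
    have hFx_nonneg : 0 ≤ F x := hFnonneg x (by linarith) (by linarith)
    rw [hSv, hTv] at hle'
    -- Sv + β Tv - (Su + β Tu) = 2 F x + 2β((x-a)²-(1-a)²) + 2β(1-x)² < 0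
    have hkey : 2 * F x + β * (2 * ((x - a) ^ 2 - (1 - a) ^ 2) + 2 * (1 - x) ^ 2) < 0 := by
      have hexp : 2 * ((x - a) ^ 2 - (1 - a) ^ 2) + 2 * (1 - x) ^ 2
          = -4 * (1 - x) * (x - a) := by ring
      rw [hexp]
      have h1 : 2 * F x < 2 * ε * (1 - x) := by linarith
      have h2 : (1 - a) / 2 < x - a := by rw [hm_def] at hxm; linarith
      have h3 : 0 < 1 - x := by linarith
      have h4 : β * (4 * (1 - x) * (x - a)) > 2 * ε * (1 - x) := by
        rw [hε_def]
        nlinarith [mul_pos (mul_pos hβ h3) (show (0:ℝ) < 4 * (x - a) - 2 * (1 - a) by linarith)]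
      nlinarith
    nlinarith [hle', hkey]
  refine ⟨main, ?_⟩
  have hlt1 : ∀ j : ℤ, u j < 1 := by
    intro j
    rcases lt_or_eq_of_le (hrange j).2 with h | h
    · exact h
    · exfalso
      have hbdd : ∃ b : ℤ, ∀ z : ℤ, u z = 1 → b ≤ z := by
        refine ⟨1, fun z hz => ?_⟩
        by_contra hc
        push_neg at hc
        have := hmono (show z ≤ 0 by omega)
        rw [hz, hu0] at this
        norm_num at this
      obtain ⟨lb, hlb, hlbmin⟩ := Int.exists_least_of_bdd hbdd ⟨j, h⟩
      apply main
      refine ⟨lb, ?_, fun k hk => ?_⟩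
      · rcases lt_or_eq_of_le (hrange (lb - 1)).2 with h' | h'
        · exact h'
        · have := hlbmin (lb - 1) h'
          omega
      · have h1 : u lb ≤ u k := hmono hk
        rw [hlb] at h1
        exact le_antisymm (hrange k).2 h1
  intro j
  refine ⟨hlt1 j, ?_⟩
  have h1 := hlt1 (-j)
  have h2 := hodd j
  linarith
end

section
/- Under the assumptions of the previous statement (minimizer $u \in \mathcal{M}$ of $\mathcal{E}$, with $-1 < u_j < 1$ for all $j$), $u$ cannot have a constant plateau: there exist no indices $j_1 < j_2$ with $u_{j_1-1} < u_{j_1} = u_{j_1+1} = \cdots = u_{j_2} < u_{j_2+1}$. Hence every minimizer is strictly increasing. -/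
open Filter
open scoped ENNReal

section Aux

lemma mono_of_odd (v : ℤ → ℝ) (hodd : ∀ j, v (-j) = - v j)
    (h : ∀ n : ℤ, 0 ≤ n → v n ≤ v (n+1)) : Monotone v := by
  apply monotone_int_of_le_succ
  intro n
  rcases le_or_gt 0 n with hn | hn
  · exact h n hn
  · have h2 := h (-n-1) (by omega)
    have e1 : v n = - v (-n) := by have := hodd (-n); simp at this; linarith
    have e2 : v (n+1) = - v (-n-1) := by
      have := hodd (-(n+1))
      simp at this
      have e : -1 + -n = -n - 1 := by ring
      rw [e] at this
      linarith
    have e3 : (-n-1) + 1 = -n := by ring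
    rw [e3] at h2
    linarith

lemma icc_of_odd (v : ℤ → ℝ) (hodd : ∀ j, v (-j) = - v j)
    (h : ∀ n : ℤ, 0 ≤ n → v n ∈ Set.Icc (-1:ℝ) 1) : ∀ j, v j ∈ Set.Icc (-1:ℝ) 1 := by
  intro j
  rcases le_or_gt 0 j with hj | hj
  · exact h j hj
  · have h2 := h (-j) (by omega)
    have e1 : v j = - v (-j) := by have := hodd (-j); simp at this; linarith
    simp only [Set.mem_Icc] at *
    constructor <;> linarith

/-- energy as a single tsum. -/
lemma energy_eq_tsum (F : ℝ → ℝ) (β : ℝ) (hβ : 0 ≤ β) (u : ℤ → ℝ)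
    (hF : ∀ j, 0 ≤ F (u j)) :
    energy F β u = ∑' j : ℤ, ENNReal.ofReal (F (u j) + β * (u (j + 1) - u j)^2) := by
  rw [energy, ← ENNReal.tsum_mul_left, ← ENNReal.tsum_add]
  congr 1
  funext j
  rw [← ENNReal.ofReal_mul hβ, ← ENNReal.ofReal_add (hF j) (by positivity)]

/-- comparison of tsums differing on a finite set. -/
lemma tsum_lt_tsum_of_finset (f g : ℤ → ℝ) (s : Finset ℤ)
    (hfg : ∀ j ∉ s, f j = g j) (hf0 : ∀ j, 0 ≤ f j) (hg0 : ∀ j, 0 ≤ g j)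
    (hlt : ∑ j ∈ s, f j < ∑ j ∈ s, g j)
    (hg : (∑' j : ℤ, ENNReal.ofReal (g j)) ≠ ⊤) :
    (∑' j : ℤ, ENNReal.ofReal (f j)) < ∑' j : ℤ, ENNReal.ofReal (g j) := by
  rw [← Summable.tsum_add_tsum_compl (s := (s : Set ℤ)) (f := fun j => ENNReal.ofReal (f j))
    ENNReal.summable ENNReal.summable,
    ← Summable.tsum_add_tsum_compl (s := (s : Set ℤ)) (f := fun j => ENNReal.ofReal (g j))
    ENNReal.summable ENNReal.summable]
  have htail : (∑' j : ((s : Set ℤ)ᶜ : Set ℤ), ENNReal.ofReal (f j)) =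
      ∑' j : ((s : Set ℤ)ᶜ : Set ℤ), ENNReal.ofReal (g j) := by
    congr 1
    funext j
    exact congrArg ENNReal.ofReal (hfg j (fun h => j.2 (Finset.mem_coe.2 h)))
  rw [htail]
  have htne : (∑' j : ((s : Set ℤ)ᶜ : Set ℤ), ENNReal.ofReal (g j)) ≠ ⊤ := by
    intro h
    rw [← Summable.tsum_add_tsum_compl (s := (s : Set ℤ)) (f := fun j => ENNReal.ofReal (g j))
      ENNReal.summable ENNReal.summable, h, add_top] at hg
    exact hg rfl
  refine ENNReal.add_lt_add_right htne ?_
  rw [s.tsum_subtype' (fun j => ENNReal.ofReal (f j)), s.tsum_subtype' (fun j => ENNReal.ofReal (g j)),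
    ← ENNReal.ofReal_sum_of_nonneg (fun i _ => hf0 i),
    ← ENNReal.ofReal_sum_of_nonneg (fun i _ => hg0 i)]
  exact (ENNReal.ofReal_lt_ofReal_iff (lt_of_le_of_lt (Finset.sum_nonneg fun i _ => hf0 i) hlt)).2 hlt

end Aux

section SBP

lemma shift_sum (g : ℤ → ℝ) (s0 s : Finset ℤ) (hg : ∀ j ∉ s0, g j = 0)
    (hsub : s0.image (· - 1) ⊆ s) : ∑ j ∈ s, g (j+1) = ∑ j ∈ s0, g j := by
  have h1 : ∑ j ∈ s, g (j+1) = ∑ j ∈ s.image (· + 1), g j := by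
    rw [Finset.sum_image (fun x _ y _ h => by omega)]
  rw [h1]
  refine (Finset.sum_subset (fun j hj => Finset.mem_image.2
    ⟨j - 1, hsub (Finset.mem_image.2 ⟨j, hj, rfl⟩), by omega⟩) (fun x _ hx => hg x hx)).symm

lemma sbp (w u : ℤ → ℝ) (s0 : Finset ℤ) (hw : ∀ j ∉ s0, w j = 0) :
    ∑ j ∈ s0 ∪ s0.image (· - 1), (w (j+1) - w j) * (u (j+1) - u j)
      = - ∑ j ∈ s0, w j * (u (j+1) + u (j-1) - 2 * u j) := by
  set s := s0 ∪ s0.image (· - 1) with hs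
  have hsub0 : s0 ⊆ s := Finset.subset_union_left
  have hsub1 : s0.image (· - 1) ⊆ s := Finset.subset_union_right
  have expand : ∀ j : ℤ, (w (j+1) - w j) * (u (j+1) - u j)
      = (w (j+1) * u (j+1)) - (w (j+1) * u ((j+1)-1)) - (w j * u (j+1)) + w j * u j := by
    intro j; have : (j+1)-1 = j := by ring
    rw [this]; ring
  have claimA : ∑ j ∈ s, w (j+1) * u (j+1) = ∑ j ∈ s0, w j * u j :=
    shift_sum (fun j => w j * u j) s0 s (fun j hj => by show w j * u j = 0; rw [hw j hj]; ring) hsub1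
  have claimB : ∑ j ∈ s, w (j+1) * u ((j+1)-1) = ∑ j ∈ s0, w j * u (j-1) :=
    shift_sum (fun j => w j * u (j-1)) s0 s (fun j hj => by show w j * u (j-1) = 0; rw [hw j hj]; ring) hsub1
  have claimC : ∑ j ∈ s, w j * u (j+1) = ∑ j ∈ s0, w j * u (j+1) :=
    (Finset.sum_subset hsub0 (fun x _ hx => by show w x * u (x+1) = 0; rw [hw x hx]; ring)).symm
  have claimD : ∑ j ∈ s, w j * u j = ∑ j ∈ s0, w j * u j :=
    (Finset.sum_subset hsub0 (fun x _ hx => by show w x * u x = 0; rw [hw x hx]; ring)).symm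
  calc ∑ j ∈ s, (w (j+1) - w j) * (u (j+1) - u j)
      = ∑ j ∈ s, ((w (j+1) * u (j+1)) - (w (j+1) * u ((j+1)-1)) - (w j * u (j+1)) + w j * u j) := by
        exact Finset.sum_congr rfl fun j _ => expand j
    _ = (∑ j ∈ s, w (j+1) * u (j+1)) - (∑ j ∈ s, w (j+1) * u ((j+1)-1))
        - (∑ j ∈ s, w j * u (j+1)) + ∑ j ∈ s, w j * u j := by
        simp [Finset.sum_add_distrib, Finset.sum_sub_distrib]
    _ = _ := by
        rw [claimA, claimB, claimC, claimD, ← Finset.sum_neg_distrib]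
        simp only [← Finset.sum_sub_distrib, ← Finset.sum_add_distrib]
        exact Finset.sum_congr rfl fun j _ => by ring

end SBP

section Key

lemma keyP (F : ℝ → ℝ) (β : ℝ) (hβ : 0 < β) (u : ℤ → ℝ)
    (hFnn : ∀ v : ℤ → ℝ, IsM v → ∀ j, 0 ≤ F (v j))
    (hmin : ∀ v : ℤ → ℝ, IsM v → energy F β u ≤ energy F β v)
    (hu : IsM u)
    (hfin : energy F β u ≠ ⊤)
    (w : ℤ → ℝ) (s0 : Finset ℤ) (hw : ∀ j ∉ s0, w j = 0)
    (t0 : ℝ) (ht0 : 0 < t0)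
    (hM : ∀ t : ℝ, 0 < t → t ≤ t0 → IsM (fun j => u j + t * w j))
    (hS1 : 0 < ∑ j ∈ s0, w j * (u (j+1) + u (j-1) - 2 * u j))
    (hΦ : Filter.Tendsto (fun t => (∑ j ∈ s0, (F (u j + t * w j) - F (u j))) / t)
      (nhdsWithin 0 (Set.Ioi (0:ℝ))) (nhds 0)) :
    False := by
  classical
  set S1 : ℝ := ∑ j ∈ s0, w j * (u (j+1) + u (j-1) - 2 * u j) with hS1def
  set s : Finset ℤ := s0 ∪ s0.image (· - 1) with hsdef
  have hsub0 : s0 ⊆ s := Finset.subset_union_left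
  set S2 : ℝ := ∑ j ∈ s, (w (j+1) - w j)^2 with hS2def
  set Gu : ℤ → ℝ := fun j => F (u j) + β * (u (j + 1) - u j)^2 with hGu
  set Gv : ℝ → ℤ → ℝ := fun t j => F (u j + t * w j)
    + β * ((u (j + 1) + t * w (j + 1)) - (u j + t * w j))^2 with hGv
  set Φ : ℝ → ℝ := fun t => ∑ j ∈ s0, (F (u j + t * w j) - F (u j)) with hΦdef
  set h : ℝ → ℝ := fun t => (∑ j ∈ s, Gv t j) - ∑ j ∈ s, Gu j with hhdef
  have hdelta : ∑ j ∈ s, (w (j+1) - w j) * (u (j+1) - u j) = -S1 := sbp w u s0 hw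
  have hkey : ∀ t : ℝ, h t = Φ t + β * (2*t*(-S1) + t^2 * S2) := by
    intro t
    have e1 : h t = ∑ j ∈ s, (Gv t j - Gu j) := by
      rw [hhdef]; simp [Finset.sum_sub_distrib]
    have e2 : ∀ j, Gv t j - Gu j = (F (u j + t * w j) - F (u j))
        + β * (2*t*((w (j+1) - w j) * (u (j+1) - u j)) + t^2 * (w (j+1) - w j)^2) := by
      intro j; rw [hGv, hGu]; ring
    have e3 : ∑ j ∈ s, (F (u j + t * w j) - F (u j)) = Φ t := by
      rw [hΦdef]
      refine (Finset.sum_subset hsub0 (fun x _ hx => ?_)).symm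
      rw [hw x hx]; simp
    calc h t = ∑ j ∈ s, ((F (u j + t * w j) - F (u j))
        + β * (2*t*((w (j+1) - w j) * (u (j+1) - u j)) + t^2 * (w (j+1) - w j)^2)) := by
          rw [e1]; exact Finset.sum_congr rfl fun j _ => e2 j
      _ = (∑ j ∈ s, (F (u j + t * w j) - F (u j)))
          + β * (2*t*(∑ j ∈ s, (w (j+1) - w j) * (u (j+1) - u j)) + t^2 * S2) := by
          rw [Finset.sum_add_distrib]
          congr 1
          rw [hS2def, mul_add, Finset.mul_sum, Finset.mul_sum, Finset.mul_sum, Finset.mul_sum,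
            ← Finset.sum_add_distrib]
          exact Finset.sum_congr rfl fun j _ => by ring
      _ = Φ t + β * (2*t*(-S1) + t^2 * S2) := by rw [e3, hdelta]
  -- the limit of h t / t
  have hlim : Filter.Tendsto (fun t => Φ t / t + β * (2*(-S1) + t * S2))
      (nhdsWithin 0 (Set.Ioi (0:ℝ))) (nhds (0 + β * (2*(-S1) + 0 * S2))) := by
    refine hΦ.add ?_
    have : Continuous (fun t : ℝ => β * (2*(-S1) + t * S2)) := by continuity
    exact (this.tendsto 0).mono_left nhdsWithin_le_nhds
  have hneg : 0 + β * (2*(-S1) + 0 * S2) < 0 := by nlinarith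
  have hev1 : ∀ᶠ t in nhdsWithin 0 (Set.Ioi (0:ℝ)),
      Φ t / t + β * (2*(-S1) + t * S2) < 0 := hlim.eventually_lt_const hneg
  have hev2 : ∀ᶠ t in nhdsWithin 0 (Set.Ioi (0:ℝ)), t ∈ Set.Ioc (0:ℝ) t0 :=
    Filter.eventually_of_mem (Ioc_mem_nhdsGT_of_mem ⟨le_refl 0, ht0⟩) (fun x hx => hx)
  obtain ⟨t, ht, htIoc⟩ := (hev1.and hev2).exists
  obtain ⟨htpos, htle⟩ := htIoc
  have htne : t ≠ 0 := ne_of_gt htpos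
  have hht : h t < 0 := by
    rw [hkey t]
    have : Φ t = t * (Φ t / t) := by field_simp
    rw [this]
    nlinarith [ht]
  -- now compare energies
  set v : ℤ → ℝ := fun j => u j + t * w j with hvdef
  have hv : IsM v := hM t htpos htle
  have hlt' : energy F β v < energy F β u := by
    rw [energy_eq_tsum F β hβ.le u (hFnn u hu), energy_eq_tsum F β hβ.le v (hFnn v hv)]
    refine tsum_lt_tsum_of_finset (fun j => Gv t j) Gu s ?_ ?_ ?_ ?_ ?_
    · intro j hj
      have hw1 : w j = 0 := hw j (fun hmem => hj (hsub0 hmem))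
      have hw2 : w (j+1) = 0 := by
        refine hw (j+1) (fun hmem => hj ?_)
        rw [hsdef]
        exact Finset.mem_union_right _ (Finset.mem_image.2 ⟨j+1, hmem, by omega⟩)
      rw [hGv]; simp only [hw1, hw2, mul_zero, add_zero]; rfl
    · intro j
      exact add_nonneg (hFnn v hv j) (by positivity)
    · intro j
      exact add_nonneg (hFnn u hu j) (by positivity)
    · have : (∑ j ∈ s, Gv t j) - ∑ j ∈ s, Gu j < 0 := hht
      linarith
    · rw [energy_eq_tsum F β hβ.le u (hFnn u hu)] at hfin
      exact hfin
  exact absurd (hmin v hv) (not_le.2 hlt')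

end Key

section Fin

lemma energy_fin (Ψ F : ℝ → ℝ) (β : ℝ) (u : ℤ → ℝ)
    (hΨ1 : Ψ 1 = 1) (hFdef : ∀ η, F η = Ψ (η ^ 2) - η ^ 2)
    (hmin : ∀ v : ℤ → ℝ, IsM v → energy F β u ≤ energy F β v) :
    energy F β u ≠ ⊤ := by
  classical
  set v0 : ℤ → ℝ := fun j => if 1 ≤ j then (1:ℝ) else if j ≤ -1 then -1 else 0 with hv0
  have hF1 : F 1 = 0 := by rw [hFdef]; norm_num [hΨ1]
  have hFm1 : F (-1) = 0 := by rw [hFdef]; norm_num [hΨ1]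
  have hM0 : IsM v0 := by
    refine ⟨?_, ?_, ?_⟩
    · intro j
      simp only [hv0]
      split_ifs <;> first | (exfalso; omega) | norm_num
    · apply monotone_int_of_le_succ
      intro n
      simp only [hv0]
      split_ifs <;> first | (exfalso; omega) | norm_num
    · intro j
      simp only [hv0, Set.mem_Icc]
      split_ifs <;> norm_num
  have h1 : (∑' j : ℤ, ENNReal.ofReal (F (v0 j))) = ENNReal.ofReal (F 0) := by
    refine tsum_eq_single (f := fun j : ℤ => ENNReal.ofReal (F (v0 j))) 0 ?_
    intro b hb
    show ENNReal.ofReal (F (v0 b)) = 0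
    have : F (v0 b) = 0 := by
      simp only [hv0]
      split_ifs
      · exact hF1
      · exact hFm1
      · exact absurd (show b = 0 by omega) hb
    rw [this]; simp
  have h2 : (∑' j : ℤ, ENNReal.ofReal ((v0 (j + 1) - v0 j) ^ 2)) =
      ∑ j ∈ ({0, -1} : Finset ℤ), ENNReal.ofReal ((v0 (j + 1) - v0 j) ^ 2) := by
    refine tsum_eq_sum ?_
    intro b hb
    have hb' : ¬ b = 0 ∧ ¬ b = -1 := by simpa using hb
    have : v0 (b+1) - v0 b = 0 := by
      simp only [hv0]
      split_ifs <;> first | (exfalso; omega) | norm_num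
    rw [this]; simp
  have hv0fin : energy F β v0 ≠ ⊤ := by
    rw [energy, h1, h2]
    refine ENNReal.add_ne_top.2 ⟨ENNReal.ofReal_ne_top, ENNReal.mul_ne_top ENNReal.ofReal_ne_top ?_⟩
    exact (ENNReal.sum_lt_top.2 fun i _ => ENNReal.ofReal_lt_top).ne
  exact fun h => hv0fin (top_unique (h ▸ hmin v0 hM0))

lemma energy_top_of_tail (F : ℝ → ℝ) (β : ℝ) (u : ℤ → ℝ) (c : ℝ) (hc : 0 < F c)
    (i : ℕ → ℤ) (hi : Function.Injective i) (h : ∀ n, u (i n) = c) :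
    energy F β u = ⊤ := by
  have h1 : (∑' j : ℤ, ENNReal.ofReal (F (u j))) = ⊤ := by
    refine top_unique ?_
    calc (⊤ : ℝ≥0∞) = ∑' _ : ℕ, ENNReal.ofReal (F c) := by
          rw [ENNReal.tsum_const_eq_top_of_ne_zero]
          simp only [ne_eq, ENNReal.ofReal_eq_zero, not_le]
          exact hc
      _ = ∑' n : ℕ, ENNReal.ofReal (F (u (i n))) := by
          congr 1; funext n; rw [h n]
      _ ≤ ∑' j : ℤ, ENNReal.ofReal (F (u j)) :=
          ENNReal.tsum_comp_le_tsum_of_injective hi _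
  rw [energy, h1, top_add]

end Fin

section CaseB

lemma caseB (Ψ F : ℝ → ℝ) (β : ℝ) (hβ : 0 < β)
    (hΨ : ContDiffOn ℝ 2 Ψ (Set.Icc (0:ℝ) 1))
    (hFdef : ∀ η, F η = Ψ (η ^ 2) - η ^ 2)
    (hFnn : ∀ v : ℤ → ℝ, IsM v → ∀ j, 0 ≤ F (v j))
    (u : ℤ → ℝ) (hu : IsM u)
    (hmin : ∀ v : ℤ → ℝ, IsM v → energy F β u ≤ energy F β v)
    (hfin : energy F β u ≠ ⊤)
    (m : ℤ) (hm : 1 ≤ m) (hum1 : u (m - 1) = 0) (hum : u m = 0)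
    (humb : 0 < u (m + 1)) : False := by
  classical
  obtain ⟨hodd, hmono, hIcc⟩ := hu
  set b := u (m + 1) with hbdef
  have hble1 : b ≤ 1 := (hIcc (m+1)).2
  have hneg : u (-m) = 0 := by have := hodd m; rw [hum] at this; simpa using this
  have hneg1 : u (-m + 1) = 0 := by
    have := hodd (m-1)
    rw [hum1] at this
    have e : -(m-1) = -m+1 := by ring
    rw [e] at this; simpa using this
  have hnegb : u (-m - 1) = -b := by
    have := hodd (m+1)
    have e : -(m+1) = -m-1 := by ring
    rw [e] at this; exact this
  have hFeven : ∀ x : ℝ, F (-x) = F x := fun x => by rw [hFdef, hFdef, neg_pow]; norm_num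
  set w : ℤ → ℝ := fun j => if j = m then 1 else if j = -m then -1 else 0 with hwdef
  set s0 : Finset ℤ := {m, -m} with hs0def
  have hw : ∀ j ∉ s0, w j = 0 := by
    intro j hj
    simp only [hs0def, Finset.mem_insert, Finset.mem_singleton] at hj
    push_neg at hj
    simp only [hwdef]
    rw [if_neg hj.1, if_neg hj.2]
  have hwm : w m = 1 := by simp [hwdef]
  have hwnm : w (-m) = -1 := by simp only [hwdef]; rw [if_neg (by omega)]; simp
  have hwodd : ∀ j, w (-j) = - w j := by
    intro j
    simp only [hwdef]
    split_ifs <;> first | (exfalso; omega) | norm_num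
  have hvodd : ∀ t : ℝ, ∀ j, u (-j) + t * w (-j) = - (u j + t * w j) := by
    intro t j; rw [hodd, hwodd]; ring
  have hM : ∀ t : ℝ, 0 < t → t ≤ b → IsM (fun j => u j + t * w j) := by
    intro t ht htle
    refine ⟨fun j => hvodd t j, mono_of_odd _ (fun j => hvodd t j) ?_,
      icc_of_odd _ (fun j => hvodd t j) ?_⟩
    · intro n hn
      show u n + t * w n ≤ u (n+1) + t * w (n+1)
      have hnm : n ≠ -m := by omega
      have hn1m : n + 1 ≠ -m := by omega
      by_cases h1 : n = m
      · rw [h1]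
        have e1 : w (m+1) = 0 := by simp only [hwdef]; rw [if_neg (by omega), if_neg (by omega)]
        rw [hwm, e1, hum]
        simp only [← hbdef]
        linarith
      · by_cases h2 : n + 1 = m
        · have e0 : w n = 0 := by simp only [hwdef]; rw [if_neg h1, if_neg hnm]
          have en : n = m - 1 := by omega
          rw [e0, h2, hwm, en, hum1, hum]
          linarith
        · have e0 : w n = 0 := by simp only [hwdef]; rw [if_neg h1, if_neg hnm]
          have e1 : w (n+1) = 0 := by simp only [hwdef]; rw [if_neg h2, if_neg hn1m]
          rw [e0, e1]
          have := hmono (show n ≤ n + 1 by omega)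
          linarith
    · intro n hn
      show u n + t * w n ∈ Set.Icc (-1:ℝ) 1
      by_cases h1 : n = m
      · rw [h1, hwm, hum]
        constructor <;> simp <;> linarith
      · have e0 : w n = 0 := by simp only [hwdef]; rw [if_neg h1, if_neg (by omega)]
        rw [e0, mul_zero, add_zero]
        exact hIcc n
  have hS1 : 0 < ∑ j ∈ s0, w j * (u (j+1) + u (j-1) - 2 * u j) := by
    rw [hs0def, Finset.sum_insert (by intro hmem; simp at hmem; omega), Finset.sum_singleton]
    rw [hwm, hwnm, hum, hum1, hneg, hneg1, hnegb, ← hbdef]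
    linarith
  have hsum : ∀ t : ℝ, (∑ j ∈ s0, (F (u j + t * w j) - F (u j))) = 2 * (F t - F 0) := by
    intro t
    rw [hs0def, Finset.sum_insert (by intro hmem; simp at hmem; omega), Finset.sum_singleton]
    rw [hwm, hwnm, hum, hneg]
    have e : (0:ℝ) + t * (-1) = -t := by ring
    have e2 : (0:ℝ) + t * 1 = t := by ring
    rw [e, e2, hFeven t]
    ring
  -- the Lipschitz bound near 0
  have hc : ContDiffWithinAt ℝ 1 Ψ (Set.Icc (0:ℝ) 1) 0 :=
    (hΨ 0 (by norm_num [Set.mem_Icc])).of_le (by norm_num)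
  obtain ⟨K, t1, ht1, hlip⟩ := hc.exists_lipschitzOnWith (convex_Icc 0 1)
  obtain ⟨ε, hε, hball⟩ := Metric.mem_nhdsWithin_iff.1 ht1
  have h0t1 : (0:ℝ) ∈ t1 := hball ⟨Metric.mem_ball_self hε, by norm_num [Set.mem_Icc]⟩
  set δ := min (Real.sqrt ε) 1 with hδdef
  have hδpos : 0 < δ := lt_min (Real.sqrt_pos.2 hε) one_pos
  have hbound : ∀ t : ℝ, 0 < t → t < δ → |F t - F 0| ≤ ((K:ℝ) + 1) * t^2 := by
    intro t ht htδ
    have ht2ε : t^2 < ε := by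
      have h1 : t < Real.sqrt ε := lt_of_lt_of_le htδ (min_le_left _ _)
      exact (Real.lt_sqrt ht.le).1 h1
    have ht21 : t^2 ≤ 1 := by nlinarith [lt_of_lt_of_le htδ (min_le_right _ _)]
    have ht2mem : t^2 ∈ t1 := by
      refine hball ⟨?_, ?_⟩
      · simp only [Metric.mem_ball, Real.dist_eq, sub_zero]
        rw [abs_of_nonneg (by positivity : (0:ℝ) ≤ t^2)]
        exact ht2ε
      · exact ⟨by positivity, ht21⟩
    have hdist : |Ψ (t^2) - Ψ 0| ≤ (K:ℝ) * t^2 := by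
      have := hlip.dist_le_mul (t^2) ht2mem 0 h0t1
      rw [Real.dist_eq, Real.dist_eq] at this
      simpa [abs_of_nonneg (by positivity : (0:ℝ) ≤ t^2)] using this
    have hF0 : F 0 = Ψ 0 := by rw [hFdef]; norm_num
    have hFt : F t = Ψ (t^2) - t^2 := hFdef t
    rw [hFt, hF0]
    calc |Ψ (t^2) - t^2 - Ψ 0| ≤ |Ψ (t^2) - Ψ 0| + |t^2| := by
          have := abs_sub (Ψ (t^2) - Ψ 0) (t^2)
          have e : Ψ (t^2) - t^2 - Ψ 0 = (Ψ (t^2) - Ψ 0) - t^2 := by ring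
          rw [e]
          exact abs_sub _ _
      _ ≤ (K:ℝ) * t^2 + t^2 := by
          have : |t^2| = t^2 := abs_of_nonneg (by positivity)
          rw [this]; linarith
      _ = ((K:ℝ) + 1) * t^2 := by ring
  have hΦ : Filter.Tendsto (fun t => (∑ j ∈ s0, (F (u j + t * w j) - F (u j))) / t)
      (nhdsWithin 0 (Set.Ioi (0:ℝ))) (nhds 0) := by
    refine Filter.Tendsto.congr (fun t => by rw [hsum t]) ?_
    apply squeeze_zero_norm' (a := fun t => 2 * ((K:ℝ)+1) * t)
    · filter_upwards [Ioo_mem_nhdsGT_of_mem (Set.mem_Ico.2 ⟨le_refl (0:ℝ), hδpos⟩)] with t ht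
      obtain ⟨htpos, htδ⟩ := ht
      have hb := hbound t htpos htδ
      rw [Real.norm_eq_abs, abs_div, abs_of_pos htpos]
      rw [div_le_iff₀ htpos]
      have : |2 * (F t - F 0)| = 2 * |F t - F 0| := by rw [abs_mul]; norm_num
      rw [this]
      nlinarith
    · have : Filter.Tendsto (fun t : ℝ => 2 * ((K:ℝ)+1) * t) (nhds 0) (nhds (2*((K:ℝ)+1)*0)) :=
        (continuous_const.mul continuous_id).tendsto 0
      simpa using this.mono_left nhdsWithin_le_nhds
  exact keyP F β hβ u hFnn hmin ⟨hodd, hmono, hIcc⟩ hfin w s0 hw b humb hM hS1 hΦ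

end CaseB

section CaseA

set_option maxHeartbeats 1600000 in
lemma caseA (Ψ F : ℝ → ℝ) (β : ℝ) (hβ : 0 < β)
    (hΨ : ContDiffOn ℝ 2 Ψ (Set.Icc (0:ℝ) 1))
    (hFdef : ∀ η, F η = Ψ (η ^ 2) - η ^ 2)
    (hFnn : ∀ v : ℤ → ℝ, IsM v → ∀ j, 0 ≤ F (v j))
    (u : ℤ → ℝ) (hu : IsM u)
    (hmin : ∀ v : ℤ → ℝ, IsM v → energy F β u ≤ energy F β v)
    (hfin : energy F β u ≠ ⊤)
    (j1 j2 : ℤ) (h12 : j1 < j2)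
    (hc0 : 0 < u j1) (hc1 : u j1 < 1)
    (hL : u (j1 - 1) < u j1) (hR : u j2 < u (j2 + 1))
    (hP : ∀ j, j1 ≤ j → j ≤ j2 → u j = u j1) : False := by
  classical
  obtain ⟨hodd, hmono, hIcc⟩ := hu
  have u0 : u 0 = 0 := by have := hodd 0; simp at this; linarith
  have hj1pos : 1 ≤ j1 := by
    by_contra h
    push_neg at h
    have := hmono (show j1 ≤ 0 by omega)
    rw [u0] at this
    linarith
  set c := u j1 with hcdef
  set a := u (j1 - 1) with hadef
  set b := u (j2 + 1) with hbdef
  have hj2c : u j2 = c := hP j2 (le_of_lt h12) le_rfl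
  have hcb : c < b := by rw [← hj2c]; exact hR
  have hba : a < c := hL
  have hj1p1 : u (j1 + 1) = c := hP _ (by omega) (by omega)
  have hj2m1 : u (j2 - 1) = c := hP _ (by omega) (by omega)
  have hble : b ≤ 1 := (hIcc _).2
  have hage : -1 ≤ a := (hIcc _).1
  have hnj1 : u (-j1) = -c := hodd j1
  have hnj2 : u (-j2) = -c := by rw [hodd j2, hj2c]
  have hnj1p : u (-j1 + 1) = -a := by
    have := hodd (j1 - 1)
    have e : -(j1-1) = -j1 + 1 := by ring
    rw [e] at this; rw [this]
  have hnj1m : u (-j1 - 1) = -c := by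
    have := hodd (j1 + 1)
    have e : -(j1+1) = -j1 - 1 := by ring
    rw [e] at this; rw [this, hj1p1]
  have hnj2p : u (-j2 + 1) = -c := by
    have := hodd (j2 - 1)
    have e : -(j2-1) = -j2 + 1 := by ring
    rw [e] at this; rw [this, hj2m1]
  have hnj2m : u (-j2 - 1) = -b := by
    have := hodd (j2 + 1)
    have e : -(j2+1) = -j2 - 1 := by ring
    rw [e] at this; rw [this]
  have hFeven : ∀ x : ℝ, F (-x) = F x := fun x => by rw [hFdef, hFdef, neg_pow]; norm_num
  set w : ℤ → ℝ := fun j => if j = j1 then (-1:ℝ) else if j = j2 then 1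
    else if j = -j1 then 1 else if j = -j2 then -1 else 0 with hwdef
  set s0 : Finset ℤ := {j1, j2, -j1, -j2} with hs0def
  have hw : ∀ j ∉ s0, w j = 0 := by
    intro j hj
    simp only [hs0def, Finset.mem_insert, Finset.mem_singleton] at hj
    push_neg at hj
    simp only [hwdef]
    rw [if_neg hj.1, if_neg hj.2.1, if_neg hj.2.2.1, if_neg hj.2.2.2]
  have hwj1 : w j1 = -1 := by simp only [hwdef]; simp
  have hwj2 : w j2 = 1 := by simp only [hwdef]; rw [if_neg (by omega : ¬ (j2 = j1))]; simp
  have hwn1 : w (-j1) = 1 := by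
    simp only [hwdef]; rw [if_neg (by omega), if_neg (by omega)]; simp
  have hwn2 : w (-j2) = -1 := by
    simp only [hwdef]; rw [if_neg (by omega), if_neg (by omega), if_neg (by omega)]; simp
  have hwodd : ∀ j, w (-j) = - w j := by
    intro j
    simp only [hwdef]
    split_ifs <;> first | (exfalso; omega) | norm_num
  have hvodd : ∀ t : ℝ, ∀ j, u (-j) + t * w (-j) = - (u j + t * w j) := by
    intro t j; rw [hodd, hwodd]; ring
  set t0 := min (c - a) (b - c) with ht0def
  have ht0 : 0 < t0 := lt_min (by linarith) (by linarith)
  have hM : ∀ t : ℝ, 0 < t → t ≤ t0 → IsM (fun j => u j + t * w j) := by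
    intro t ht htle
    have ht1 : t ≤ c - a := le_trans htle (min_le_left _ _)
    have ht2 : t ≤ b - c := le_trans htle (min_le_right _ _)
    refine ⟨fun j => hvodd t j, mono_of_odd _ (fun j => hvodd t j) ?_,
      icc_of_odd _ (fun j => hvodd t j) ?_⟩
    · intro n hn
      show u n + t * w n ≤ u (n+1) + t * w (n+1)
      by_cases e1 : n = j1
      · rw [e1, hwj1, hj1p1]
        have hwge : (0:ℝ) ≤ w (j1+1) := by
          simp only [hwdef]
          split_ifs <;> first | (exfalso; omega) | norm_num
        nlinarith
      · by_cases e2 : n = j2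
        · have ew : w (j2+1) = 0 := by
            simp only [hwdef]
            rw [if_neg (by omega), if_neg (by omega), if_neg (by omega), if_neg (by omega)]
          rw [e2, hwj2, ew, hj2c]
          linarith
        · by_cases e3 : n + 1 = j1
          · have ew : w n = 0 := by
              simp only [hwdef]
              rw [if_neg e1, if_neg e2, if_neg (by omega), if_neg (by omega)]
            have en : n = j1 - 1 := by omega
            rw [ew, e3, hwj1, en]
            rw [← hadef, ← hcdef]
            linarith
          · by_cases e4 : n + 1 = j2
            · have ew : w n = 0 := by
                simp only [hwdef]
                rw [if_neg e1, if_neg e2, if_neg (by omega), if_neg (by omega)]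
              have en : n = j2 - 1 := by omega
              rw [ew, e4, hwj2, en, hj2m1]
              linarith
            · have ew : w n = 0 := by
                simp only [hwdef]
                rw [if_neg e1, if_neg e2, if_neg (by omega), if_neg (by omega)]
              have ew1 : w (n+1) = 0 := by
                simp only [hwdef]
                rw [if_neg e3, if_neg e4, if_neg (by omega), if_neg (by omega)]
              rw [ew, ew1]
              have := hmono (show n ≤ n + 1 by omega)
              linarith
    · intro n hn
      show u n + t * w n ∈ Set.Icc (-1:ℝ) 1
      by_cases e1 : n = j1
      · rw [e1, hwj1]
        constructor
        · simp only [← hcdef]; linarith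
        · simp only [← hcdef]; linarith
      · by_cases e2 : n = j2
        · rw [e2, hwj2, hj2c]
          constructor
          · linarith
          · linarith
        · have ew : w n = 0 := by
            simp only [hwdef]
            rw [if_neg e1, if_neg e2, if_neg (by omega), if_neg (by omega)]
          rw [ew, mul_zero, add_zero]
          exact hIcc n
  have hS1 : 0 < ∑ j ∈ s0, w j * (u (j+1) + u (j-1) - 2 * u j) := by
    rw [hs0def, Finset.sum_insert (by intro hmem; simp at hmem; omega),
      Finset.sum_insert (by intro hmem; simp at hmem; omega),
      Finset.sum_insert (by intro hmem; simp at hmem; omega), Finset.sum_singleton]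
    rw [hwj1, hwj2, hwn1, hwn2, hj1p1, hj2c, hj2m1, hnj1p, hnj1m, hnj1, hnj2p, hnj2m, hnj2]
    rw [← hcdef, ← hadef, ← hbdef]
    linarith
  have hsum : ∀ t : ℝ, (∑ j ∈ s0, (F (u j + t * w j) - F (u j)))
      = 2*((F (c + t) - F c) + (F (c - t) - F c)) := by
    intro t
    rw [hs0def, Finset.sum_insert (by intro hmem; simp at hmem; omega),
      Finset.sum_insert (by intro hmem; simp at hmem; omega),
      Finset.sum_insert (by intro hmem; simp at hmem; omega), Finset.sum_singleton]
    rw [hwj1, hwj2, hwn1, hwn2, hj2c, hnj1, hnj2, ← hcdef]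
    rw [show c + t*(-1) = c - t from by ring, show c + t*1 = c + t from by ring,
      show -c + t*1 = -(c - t) from by ring, show -c + t*(-1) = -(c + t) from by ring,
      hFeven (c - t), hFeven (c + t), hFeven c]
    ring
  -- differentiability of F at c
  have hc2 : c^2 ∈ Set.Ioo (0:ℝ) 1 := ⟨by positivity, by nlinarith⟩
  have hmem : Set.Icc (0:ℝ) 1 ∈ nhds (c^2) := Icc_mem_nhds hc2.1 hc2.2
  have hdiff : DifferentiableAt ℝ Ψ (c^2) :=
    (hΨ.differentiableOn (by norm_num)).differentiableAt hmem
  have hsq : HasDerivAt (fun x : ℝ => x^2) (2*c) c := by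
    simpa using hasDerivAt_pow 2 c
  have hcomp : HasDerivAt (fun x : ℝ => Ψ (x^2)) (deriv Ψ (c^2) * (2*c)) c := by
    have h : HasDerivAt (Ψ ∘ (fun x : ℝ => x^2)) (deriv Ψ (c^2) * (2*c)) c :=
      HasDerivAt.comp (x := c) (h₂ := Ψ) (h := fun x : ℝ => x^2)
        (by exact hdiff.hasDerivAt) hsq
    exact h
  have hFd : HasDerivAt F (deriv Ψ (c^2) * (2*c) - 2*c) c := by
    have hFe : F = fun η => Ψ (η^2) - η^2 := funext hFdef
    rw [hFe]
    exact hcomp.sub hsq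
  set d := deriv Ψ (c^2) * (2*c) - 2*c with hddef
  have hct : HasDerivAt (fun t : ℝ => c + t) 1 0 := (hasDerivAt_id 0).const_add c
  have hcmt : HasDerivAt (fun t : ℝ => c - t) (-1) 0 := (hasDerivAt_id 0).const_sub c
  have hFd1 : HasDerivAt F d (c + 0) := by simpa using hFd
  have hFd2 : HasDerivAt F d (c - 0) := by simpa using hFd
  have g1 : HasDerivAt (fun t : ℝ => F (c + t)) (d * 1) 0 := hFd1.comp 0 hct
  have g2 : HasDerivAt (fun t : ℝ => F (c - t)) (d * (-1)) 0 := hFd2.comp 0 hcmt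
  set φ : ℝ → ℝ := fun t => 2*((F (c + t) - F c) + (F (c - t) - F c)) with hφdef
  have hφd : HasDerivAt φ 0 0 := by
    have : HasDerivAt φ (2*((d*1) + (d*(-1)))) 0 :=
      ((g1.sub_const (F c)).add (g2.sub_const (F c))).const_mul 2
    convert this using 1
    ring
  have hφ0 : φ 0 = 0 := by simp only [hφdef]; norm_num
  have hslope : Filter.Tendsto (fun t => φ t / t) (nhdsWithin 0 (Set.Ioi (0:ℝ))) (nhds 0) := by
    rw [hasDerivAt_iff_tendsto_slope] at hφd
    have hmono' : nhdsWithin (0:ℝ) (Set.Ioi 0) ≤ nhdsWithin 0 {(0:ℝ)}ᶜ :=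
      nhdsWithin_mono 0 (fun x hx => ne_of_gt hx)
    refine Filter.Tendsto.congr (fun t => ?_) (hφd.mono_left hmono')
    rw [slope_def_field, hφ0, sub_zero, sub_zero]
  have hΦ : Filter.Tendsto (fun t => (∑ j ∈ s0, (F (u j + t * w j) - F (u j))) / t)
      (nhdsWithin 0 (Set.Ioi (0:ℝ))) (nhds 0) := by
    refine Filter.Tendsto.congr (fun t => ?_) hslope
    rw [hsum t]
  exact keyP F β hβ u hFnn hmin ⟨hodd, hmono, hIcc⟩ hfin w s0 hw t0 ht0 hM hS1 hΦ

end CaseA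


set_option maxHeartbeats 1600000 in
/-- a minimizer of the energy with `-1 < u_j < 1` has no constant
plateau, hence is strictly increasing. -/
theorem stmt5 (Ψ : ℝ → ℝ) (β : ℝ) (hβ : 0 < β)
    (hΨ : ContDiffOn ℝ 2 Ψ (Set.Icc (0 : ℝ) 1))
    (hΨ1 : Ψ 1 = 1) (hΨ'1 : derivWithin Ψ (Set.Icc (0 : ℝ) 1) 1 = 1)
    (F : ℝ → ℝ) (hFdef : ∀ η, F η = Ψ (η ^ 2) - η ^ 2)
    (hFpos : ∀ η ∈ Set.Ioo (-1 : ℝ) 1, 0 < F η)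
    (u : ℤ → ℝ) (hu : IsM u) (hopen : ∀ j : ℤ, -1 < u j ∧ u j < 1)
    (hmin : ∀ v : ℤ → ℝ, IsM v → energy F β u ≤ energy F β v) :
    (¬ ∃ j1 j2 : ℤ, j1 < j2 ∧ u (j1 - 1) < u j1 ∧ u j2 < u (j2 + 1) ∧
        ∀ j : ℤ, j1 ≤ j → j ≤ j2 → u j = u j1) ∧
      StrictMono u := by
  classical
  obtain ⟨hodd, hmono, hIcc⟩ := hu
  have hu' : IsM u := ⟨hodd, hmono, hIcc⟩
  have u0 : u 0 = 0 := by have := hodd 0; simp at this; linarith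
  have hFnn : ∀ v : ℤ → ℝ, IsM v → ∀ j, 0 ≤ F (v j) := by
    intro v hv j
    obtain ⟨hvo, hvm, hvi⟩ := hv
    have h := hvi j
    rcases eq_or_lt_of_le h.1 with he | hlt1
    · rw [← he, hFdef]; norm_num [hΨ1]
    rcases eq_or_lt_of_le h.2 with he | hlt2
    · rw [he, hFdef]; norm_num [hΨ1]
    · exact (hFpos _ ⟨hlt1, hlt2⟩).le
  have hfin := energy_fin Ψ F β u hΨ1 hFdef hmin
  have noplat : ¬ ∃ j1 j2 : ℤ, j1 < j2 ∧ u (j1 - 1) < u j1 ∧ u j2 < u (j2 + 1) ∧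
      ∀ j : ℤ, j1 ≤ j → j ≤ j2 → u j = u j1 := by
    rintro ⟨j1, j2, h12, hLp, hRp, hPp⟩
    have hj2c : u j2 = u j1 := hPp j2 h12.le le_rfl
    rcases lt_trichotomy (u j1) 0 with hneg | hzero | hpos
    · -- mirror case: plateau with value -u j1 > 0 on [-j2, -j1]
      refine caseA Ψ F β hβ hΨ hFdef hFnn u hu' hmin hfin (-j2) (-j1) (by omega)
        ?_ ?_ ?_ ?_ ?_
      · rw [hodd j2, hj2c]; linarith
      · rw [hodd j2, hj2c]; linarith [(hopen j1).1]
      · have e : -j2 - 1 = -(j2+1) := by ring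
        rw [e, hodd (j2+1), hodd j2]
        linarith [hRp]
      · have e : -j1 + 1 = -(j1-1) := by ring
        rw [e, hodd (j1-1), hodd j1]
        linarith [hLp]
      · intro k hk1 hk2
        have h1 : u (-k) = u j1 := hPp (-k) (by omega) (by omega)
        have h2 : u k = - u (-k) := by have := hodd (-k); simp at this; linarith
        rw [h2, h1, hodd j2, hj2c]
    · -- plateau value 0
      have hj1le : j1 ≤ 0 := by
        by_contra hcon
        push_neg at hcon
        have h1 : u 0 ≤ u (j1 - 1) := hmono (by omega)
        rw [u0] at h1
        linarith
      have hj2ge : 0 ≤ j2 := by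
        by_contra hcon
        push_neg at hcon
        have h1 : u (j2 + 1) ≤ u 0 := hmono (by omega)
        rw [u0] at h1
        linarith [hRp, hj2c, hzero]
      by_cases hj2pos : 1 ≤ j2
      · refine caseB Ψ F β hβ hΨ hFdef hFnn u hu' hmin hfin j2 hj2pos ?_ ?_ ?_
        · rw [hPp (j2-1) (by omega) (by omega)]; exact hzero
        · rw [hj2c]; exact hzero
        · have := hRp; rw [hj2c, hzero] at this; exact this
      · have hj1neg : j1 ≤ -1 := by omega
        refine caseB Ψ F β hβ hΨ hFdef hFnn u hu' hmin hfin (-j1) (by omega) ?_ ?_ ?_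
        · have e : -j1 - 1 = -(j1+1) := by ring
          rw [e, hodd (j1+1), hPp (j1+1) (by omega) (by omega), hzero]; ring
        · rw [hodd j1, hzero]; ring
        · have e : -j1 + 1 = -(j1-1) := by ring
          rw [e, hodd (j1-1)]
          linarith [hLp, hzero]
    · exact caseA Ψ F β hβ hΨ hFdef hFnn u hu' hmin hfin j1 j2 h12 hpos (hopen j1).2 hLp hRp hPp
  refine ⟨noplat, ?_⟩
  intro i j hij
  rcases lt_or_ge (u i) (u j) with h | h
  · exact h
  exfalso
  have hc : u i = u j := le_antisymm (hmono hij.le) h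
  set c := u i with hcdef
  have hujc : u j = c := hc.symm
  have hFc : 0 < F c := hFpos c ⟨(hopen i).1, (hopen i).2⟩
  have hex1 : ∃ k, c < u k := by
    by_contra hcon
    push_neg at hcon
    have htail : ∀ n : ℕ, u (j + n) = c := by
      intro n
      refine le_antisymm (hcon _) ?_
      have h1 : u j ≤ u (j + n) := hmono (by omega)
      linarith [hujc]
    exact hfin (energy_top_of_tail F β u c hFc (fun n => j + n)
      (fun a b hab => by simp only [] at hab; omega) htail)
  have hex2 : ∃ k, u k < c := by
    by_contra hcon
    push_neg at hcon
    have htail : ∀ n : ℕ, u (i - n) = c := by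
      intro n
      refine le_antisymm ?_ (hcon _)
      have h1 : u (i - n) ≤ u i := hmono (by omega)
      linarith
    exact hfin (energy_top_of_tail F β u c hFc (fun n => i - n)
      (fun a b hab => by simp only [] at hab; omega) htail)
  obtain ⟨k0, hk0P, hk0min⟩ := Int.exists_least_of_bdd (P := fun z => c < u z)
    (Hbdd := ⟨j + 1, fun z hz => by
      by_contra hcon
      push_neg at hcon
      have : u z ≤ u j := hmono (by omega)
      rw [hujc] at this
      linarith⟩) (Hinh := hex1)
  obtain ⟨kg, hkgP, hkgmax⟩ := Int.exists_greatest_of_bdd (P := fun z => u z < c)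
    (Hbdd := ⟨i - 1, fun z hz => by
      by_contra hcon
      push_neg at hcon
      have : u i ≤ u z := hmono (by omega)
      linarith⟩) (Hinh := hex2)
  have hk0j : j + 1 ≤ k0 := by
    by_contra hcon
    push_neg at hcon
    have : u k0 ≤ u j := hmono (by omega)
    rw [hujc] at this
    linarith
  have hkgi : kg ≤ i - 1 := by
    by_contra hcon
    push_neg at hcon
    have : u i ≤ u kg := hmono (by omega)
    linarith
  have hval : ∀ k, kg + 1 ≤ k → k ≤ k0 - 1 → u k = c := by
    intro k hk1 hk2
    refine le_antisymm ?_ ?_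
    · by_contra hcon
      push_neg at hcon
      have := hk0min k hcon
      omega
    · by_contra hcon
      push_neg at hcon
      have := hkgmax k hcon
      omega
  refine noplat ⟨kg + 1, k0 - 1, by omega, ?_, ?_, ?_⟩
  · have e : kg + 1 - 1 = kg := by ring
    rw [e, hval (kg+1) le_rfl (by omega)]
    exact hkgP
  · have e : k0 - 1 + 1 = k0 := by ring
    rw [e, hval (k0-1) (by omega) le_rfl]
    exact hk0P
  · intro k hk1 hk2
    rw [hval k hk1 hk2, hval (kg+1) le_rfl (by omega)]
end

section
/- Let $\Psi$ be $C^2$ on $[0,1]$ with $\Psi(1)=\Psi'(1)=1$, $\Psi''(1) > 0$, and $\Psi(x) > x$ for $0 \leq x < 1$, and let $\beta > 0$. Then there exists an odd, strictly increasing sequence $u : \mathbb{Z} \to (-1,1)$ with $u_j \to \pm 1$ as $j \to \pm\infty$ solving the standing wave equation $\Psi'(u_j^2)u_j - u_j = \beta(u_{j+1} + u_{j-1} - 2u_j)$ for all $j \in \mathbb{Z}$. -/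
open Filter Set Topology

theorem lsc_exists_min {X : Type*} [TopologicalSpace X] [T2Space X] {K : Set X}
    (hK : IsCompact K) (hne : K.Nonempty) {F : X → ENNReal}
    (hF : LowerSemicontinuous F) : ∃ w ∈ K, ∀ v ∈ K, F w ≤ F v := by
  set m := sInf (F '' K) with hm
  rcases eq_or_lt_of_le (le_top : m ≤ ⊤) with hTop | hlt
  · obtain ⟨x, hx⟩ := hne
    refine ⟨x, hx, fun v hv => ?_⟩
    have : m ≤ F v := sInf_le ⟨v, hv, rfl⟩
    rw [hTop] at this
    simp [eq_top_iff.2 this]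
  · have hne' : (Ioi m).Nonempty := ⟨⊤, hlt⟩
    haveI : Nonempty (Ioi m) := hne'.to_subtype
    set C : Ioi m → Set X := fun r => K ∩ {x | F x ≤ r} with hC
    have hCne : ∀ r : Ioi m, (C r).Nonempty := by
      rintro ⟨r, hr⟩
      obtain ⟨y, hy, hyr⟩ := sInf_lt_iff.1 (show sInf (F '' K) < r from hm ▸ hr)
      obtain ⟨x, hx, rfl⟩ := hy
      exact ⟨x, hx, le_of_lt hyr⟩
    have hCcl : ∀ r : Ioi m, IsClosed (C r) :=
      fun r => hK.isClosed.inter (hF.isClosed_preimage r)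
    have hCcp : ∀ r : Ioi m, IsCompact (C r) :=
      fun r => hK.inter_right (hF.isClosed_preimage r)
    have hdir : Directed (· ⊇ ·) C := by
      rintro ⟨r, hr⟩ ⟨s, hs⟩
      exact ⟨⟨min r s, mem_Ioi.2 (lt_min hr hs)⟩,
        fun x hx => ⟨hx.1, le_trans hx.2 (min_le_left r s)⟩,
        fun x hx => ⟨hx.1, le_trans hx.2 (min_le_right r s)⟩⟩
    obtain ⟨x, hx⟩ := IsCompact.nonempty_iInter_of_directed_nonempty_isCompact_isClosed
      C hdir hCne hCcp hCcl
    simp only [mem_iInter] at hx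
    have hxK : x ∈ K := (hx ⟨⊤, hlt⟩).1
    refine ⟨x, hxK, fun v hv => ?_⟩
    have hxm : F x ≤ m := le_of_forall_gt_imp_ge_of_dense fun r hr => (hx ⟨r, hr⟩).2
    exact hxm.trans (sInf_le ⟨v, hv, rfl⟩)

theorem deriv_nonpos_of_min_left {φ : ℝ → ℝ} {a c d : ℝ} (hac : a < c)
    (hd : HasDerivWithinAt φ d (Icc a c) c) (hmin : ∀ t ∈ Icc a c, φ c ≤ φ t) :
    d ≤ 0 := by
  have h := hasDerivWithinAt_iff_tendsto_slope.1 hd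
  have hsub : Icc a c \ {c} = Ico a c := by
    ext x; simp only [mem_diff, mem_Icc, mem_Ico, mem_singleton_iff]
    constructor
    · rintro ⟨⟨h1, h2⟩, h3⟩; exact ⟨h1, lt_of_le_of_ne h2 h3⟩
    · rintro ⟨h1, h2⟩; exact ⟨⟨h1, h2.le⟩, h2.ne⟩
  rw [hsub] at h
  haveI : (𝓝[Ico a c] c).NeBot := right_nhdsWithin_Ico_neBot hac
  refine le_of_tendsto h (eventually_nhdsWithin_of_forall fun t ht => ?_)
  have h1 : φ c ≤ φ t := hmin t (Ico_subset_Icc_self ht)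
  have h2 : t - c < 0 := sub_neg.2 ht.2
  rw [slope_def_field]
  exact div_nonpos_of_nonneg_of_nonpos (by linarith) h2.le

theorem deriv_nonneg_of_min_right {φ : ℝ → ℝ} {b c d : ℝ} (hcb : c < b)
    (hd : HasDerivWithinAt φ d (Icc c b) c) (hmin : ∀ t ∈ Icc c b, φ c ≤ φ t) :
    0 ≤ d := by
  have h := hasDerivWithinAt_iff_tendsto_slope.1 hd
  have hsub : Icc c b \ {c} = Ioc c b := by
    ext x; simp only [mem_diff, mem_Icc, mem_Ioc, mem_singleton_iff]
    constructor
    · rintro ⟨⟨h1, h2⟩, h3⟩; exact ⟨lt_of_le_of_ne h1 (Ne.symm h3), h2⟩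
    · rintro ⟨h1, h2⟩; exact ⟨⟨h1.le, h2⟩, h1.ne'⟩
  rw [hsub] at h
  haveI : (𝓝[Ioc c b] c).NeBot := left_nhdsWithin_Ioc_neBot hcb
  refine ge_of_tendsto h (eventually_nhdsWithin_of_forall fun t ht => ?_)
  have h1 : φ c ≤ φ t := hmin t (Ioc_subset_Icc_self ht)
  have h2 : 0 < t - c := sub_pos.2 ht.1
  rw [slope_def_field]
  exact div_nonneg (by linarith) h2.le


noncomputable def pj (x : ℝ) : ℝ := max 0 (min x 1)

noncomputable def Wf (Ψ : ℝ → ℝ) (u : ℝ) : ℝ := Ψ (pj u ^ 2) - pj u ^ 2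

lemma pj_mem (x : ℝ) : pj x ∈ Icc (0:ℝ) 1 := by
  constructor
  · exact le_max_left _ _
  · simp only [pj, max_le_iff]
    exact ⟨zero_le_one, min_le_right _ _⟩

lemma pj_eq {x : ℝ} (hx : x ∈ Icc (0:ℝ) 1) : pj x = x := by
  simp only [pj, min_eq_left hx.2, max_eq_right hx.1]

lemma pj_sq_mem (x : ℝ) : pj x ^ 2 ∈ Icc (0:ℝ) 1 := by
  obtain ⟨h1, h2⟩ := pj_mem x
  exact ⟨sq_nonneg _, by nlinarith⟩

lemma continuous_pj : Continuous pj :=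
  continuous_const.max (continuous_id.min continuous_const)

section W
variable {Ψ : ℝ → ℝ}

lemma Psi_ge (hΨ1 : Ψ 1 = 1) (hΨx : ∀ x ∈ Ico (0:ℝ) 1, x < Ψ x) :
    ∀ x ∈ Icc (0:ℝ) 1, x ≤ Ψ x := by
  intro x hx
  rcases eq_or_lt_of_le hx.2 with h | h
  · rw [h, hΨ1]
  · exact (hΨx x ⟨hx.1, h⟩).le

lemma Wf_nonneg (hΨ1 : Ψ 1 = 1) (hΨx : ∀ x ∈ Ico (0:ℝ) 1, x < Ψ x) (u : ℝ) :
    0 ≤ Wf Ψ u :=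
  sub_nonneg.2 (Psi_ge hΨ1 hΨx _ (pj_sq_mem u))

lemma Wf_eq {u : ℝ} (hu : u ∈ Icc (0:ℝ) 1) : Wf Ψ u = Ψ (u ^ 2) - u ^ 2 := by
  simp only [Wf, pj_eq hu]

lemma Wf_pos (hΨx : ∀ x ∈ Ico (0:ℝ) 1, x < Ψ x) {u : ℝ} (hu : u ∈ Ico (0:ℝ) 1) :
    0 < Wf Ψ u := by
  rw [Wf_eq ⟨hu.1, hu.2.le⟩]
  have : u ^ 2 ∈ Ico (0:ℝ) 1 := ⟨sq_nonneg _, by nlinarith [hu.1, hu.2]⟩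
  exact sub_pos.2 (hΨx _ this)

lemma Wf_one (hΨ1 : Ψ 1 = 1) : Wf Ψ 1 = 0 := by
  rw [Wf_eq ⟨zero_le_one, le_refl 1⟩]; simp [hΨ1]

lemma Wf_continuous (hΨc : ContinuousOn Ψ (Icc (0:ℝ) 1)) : Continuous (Wf Ψ) := by
  have h1 : Continuous fun u : ℝ => pj u ^ 2 := (continuous_pj.pow 2)
  have h2 : Continuous fun u : ℝ => Ψ (pj u ^ 2) :=
    hΨc.comp_continuous h1 fun x => pj_sq_mem x
  exact h2.sub h1

lemma Wf_hasDerivAt (hΨ : ContDiffOn ℝ 2 Ψ (Icc (0:ℝ) 1)) {c : ℝ} (hc : c ∈ Ioo (0:ℝ) 1) :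
    HasDerivAt (Wf Ψ) (derivWithin Ψ (Icc (0:ℝ) 1) (c ^ 2) * (2 * c) - 2 * c) c := by
  have hc2 : c ^ 2 ∈ Ioo (0:ℝ) 1 := ⟨pow_pos hc.1 2, by nlinarith [hc.1, hc.2]⟩
  have hdiff : DifferentiableOn ℝ Ψ (Icc (0:ℝ) 1) :=
    hΨ.differentiableOn (by norm_num)
  have hΨd : HasDerivAt Ψ (derivWithin Ψ (Icc (0:ℝ) 1) (c ^ 2)) (c ^ 2) := by
    have h1 : HasDerivWithinAt Ψ (derivWithin Ψ (Icc (0:ℝ) 1) (c ^ 2)) (Icc (0:ℝ) 1) (c ^ 2) :=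
      (hdiff (c ^ 2) (Ioo_subset_Icc_self hc2)).hasDerivWithinAt
    exact h1.hasDerivAt (Icc_mem_nhds hc2.1 hc2.2)
  have hsq : HasDerivAt (fun u : ℝ => u ^ 2) (2 * c) c := by
    exact (hasDerivAt_pow 2 c).congr_deriv (by norm_num)
  have hcomp : HasDerivAt (fun u : ℝ => Ψ (u ^ 2))
      (derivWithin Ψ (Icc (0:ℝ) 1) (c ^ 2) * (2 * c)) c :=
    HasDerivAt.comp (h₂ := Ψ) (h := fun u : ℝ => u ^ 2) c hΨd hsq
  have hW : HasDerivAt (fun u : ℝ => Ψ (u ^ 2) - u ^ 2)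
      (derivWithin Ψ (Icc (0:ℝ) 1) (c ^ 2) * (2 * c) - 2 * c) c := hcomp.sub hsq
  refine hW.congr_of_eventuallyEq ?_
  filter_upwards [Ioo_mem_nhds hc.1 hc.2] with x hx
  exact Wf_eq ⟨hx.1.le, hx.2.le⟩

lemma Wf_hasDerivWithinAt_one (hΨ : ContDiffOn ℝ 2 Ψ (Icc (0:ℝ) 1))
    (hΨ'1 : derivWithin Ψ (Icc (0:ℝ) 1) 1 = 1) :
    HasDerivWithinAt (Wf Ψ) 0 (Icc (0:ℝ) 1) 1 := by
  have hdiff : DifferentiableOn ℝ Ψ (Icc (0:ℝ) 1) :=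
    hΨ.differentiableOn (by norm_num)
  have hone : (1:ℝ) ∈ Icc (0:ℝ) 1 := ⟨zero_le_one, le_refl 1⟩
  have hΨd : HasDerivWithinAt Ψ 1 (Icc (0:ℝ) 1) 1 := by
    have := (hdiff 1 hone).hasDerivWithinAt
    rwa [hΨ'1] at this
  have hsq : HasDerivWithinAt (fun u : ℝ => u ^ 2) 2 (Icc (0:ℝ) 1) 1 := by
    have h : HasDerivAt (fun u : ℝ => u ^ 2) 2 (1:ℝ) := by
      exact (hasDerivAt_pow 2 (1:ℝ)).congr_deriv (by norm_num)
    exact h.hasDerivWithinAt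
  have hmaps : MapsTo (fun u : ℝ => u ^ 2) (Icc (0:ℝ) 1) (Icc (0:ℝ) 1) := by
    intro x hx
    have h1 : x ^ 2 ∈ Icc (0:ℝ) 1 := ⟨sq_nonneg x, by nlinarith [hx.1, hx.2]⟩
    exact h1
  have hcomp : HasDerivWithinAt (fun u : ℝ => Ψ (u ^ 2)) (1 * 2) (Icc (0:ℝ) 1) 1 := by
    have h := HasDerivWithinAt.comp (x := (1:ℝ)) (by simpa using hΨd) hsq hmaps
    simpa [Function.comp_def] using h
  have hW : HasDerivWithinAt (fun u : ℝ => Ψ (u ^ 2) - u ^ 2) 0 (Icc (0:ℝ) 1) 1 := by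
    have := hcomp.sub hsq
    exact this.congr_deriv (by norm_num)
  refine hW.congr (fun x hx => (Wf_eq hx)) (Wf_eq hone)

end W



noncomputable def tte (Ψ : ℝ → ℝ) (β : ℝ) (w : ℕ → ℝ) (n : ℕ) : ENNReal :=
  ENNReal.ofReal (Wf Ψ (w (n+1)) + β * (w (n+1) - w n)^2)

noncomputable def Fe (Ψ : ℝ → ℝ) (β : ℝ) (w : ℕ → ℝ) : ENNReal := ∑' n, tte Ψ β w n

def Kset : Set (ℕ → ℝ) := {w | w 0 = 0 ∧ Monotone w ∧ ∀ n, w n ∈ Icc (0:ℝ) 1}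

lemma Kset_isClosed : IsClosed Kset := by
  have h0 : IsClosed {w : ℕ → ℝ | w 0 = 0} :=
    isClosed_eq (continuous_apply 0) continuous_const
  have h1 : IsClosed {w : ℕ → ℝ | Monotone w} := by
    have : {w : ℕ → ℝ | Monotone w} = ⋂ n : ℕ, {w | w n ≤ w (n+1)} := by
      ext w
      simp only [mem_setOf_eq, mem_iInter]
      exact ⟨fun h n => h (Nat.le_succ n), fun h => monotone_nat_of_le_succ h⟩
    rw [this]
    exact isClosed_iInter fun n =>
      isClosed_le (continuous_apply n) (continuous_apply (n+1))
  have h2 : IsClosed {w : ℕ → ℝ | ∀ n, w n ∈ Icc (0:ℝ) 1} := by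
    have : {w : ℕ → ℝ | ∀ n, w n ∈ Icc (0:ℝ) 1} = ⋂ n : ℕ, (fun w : ℕ → ℝ => w n) ⁻¹' Icc 0 1 := by
      ext w; simp [mem_iInter]
    rw [this]
    exact isClosed_iInter fun n => IsClosed.preimage (continuous_apply n) isClosed_Icc
  have : Kset = {w : ℕ → ℝ | w 0 = 0} ∩ ({w | Monotone w} ∩ {w | ∀ n, w n ∈ Icc (0:ℝ) 1}) := by
    ext w; simp [Kset, mem_setOf_eq, and_assoc]
  rw [this]
  exact h0.inter (h1.inter h2)

lemma Kset_isCompact : IsCompact Kset := by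
  have hsub : Kset ⊆ Set.pi univ (fun _ : ℕ => Icc (0:ℝ) 1) := by
    intro w hw
    intro n _
    exact hw.2.2 n
  exact IsCompact.of_isClosed_subset (isCompact_univ_pi fun _ => isCompact_Icc)
    Kset_isClosed hsub

def vcomp : ℕ → ℝ := fun n => if n = 0 then 0 else 1

lemma vcomp_mem : vcomp ∈ Kset := by
  refine ⟨rfl, ?_, ?_⟩
  · apply monotone_nat_of_le_succ
    intro n
    by_cases h : n = 0 <;> simp [vcomp, h]
  · intro n
    by_cases h : n = 0 <;> simp [vcomp, h]

lemma tte_continuous (Ψ : ℝ → ℝ) (β : ℝ) (hWc : Continuous (Wf Ψ)) (n : ℕ) :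
    Continuous fun w : ℕ → ℝ => tte Ψ β w n := by
  apply ENNReal.continuous_ofReal.comp
  exact ((hWc.comp (continuous_apply (n+1)))).add
    ((continuous_const.mul (((continuous_apply (n+1)).sub (continuous_apply n)).pow 2)))

lemma Fe_lsc (Ψ : ℝ → ℝ) (β : ℝ) (hWc : Continuous (Wf Ψ)) :
    LowerSemicontinuous (Fe Ψ β) :=
  lowerSemicontinuous_tsum fun n => (tte_continuous Ψ β hWc n).lowerSemicontinuous

lemma Fe_vcomp (Ψ : ℝ → ℝ) (β : ℝ) (hW1 : Wf Ψ 1 = 0) : Fe Ψ β vcomp = ENNReal.ofReal β := by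
  have h : ∀ n, tte Ψ β vcomp n = if n = 0 then ENNReal.ofReal β else 0 := by
    intro n
    by_cases h : n = 0
    · subst h; simp [tte, vcomp, hW1]
    · simp [tte, vcomp, h, hW1]
  rw [Fe]
  rw [tsum_congr h]
  simp [tsum_ite_eq]






section main
variable {Ψ : ℝ → ℝ} {β : ℝ} {w : ℕ → ℝ}

lemma local_min (hβ : 0 ≤ β) (hWnn : ∀ u, 0 ≤ Wf Ψ u)
    (hw : w ∈ Kset) (hmin : ∀ v ∈ Kset, Fe Ψ β w ≤ Fe Ψ β v) (hfin : Fe Ψ β w ≠ ⊤)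
    (m : ℕ) {t : ℝ} (ht : t ∈ Icc (w m) (w (m+2))) :
    Wf Ψ (w (m+1)) + β * ((w (m+1) - w m)^2 + (w (m+2) - w (m+1))^2) ≤
      Wf Ψ t + β * ((t - w m)^2 + (w (m+2) - t)^2) := by
  classical
  set v : ℕ → ℝ := Function.update w (m+1) t with hv
  have hvm : v m = w m := Function.update_of_ne (by omega) _ _
  have hvm1 : v (m+1) = t := Function.update_self _ _ _
  have hvm2 : v (m+2) = w (m+2) := Function.update_of_ne (by omega) _ _
  have hvK : v ∈ Kset := by
    refine ⟨?_, ?_, ?_⟩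
    · rw [hv, Function.update_of_ne (by omega)]; exact hw.1
    · apply monotone_nat_of_le_succ
      intro n
      rcases eq_or_ne n m with rfl | hnm
      · rw [hvm, hvm1]; exact ht.1
      · rcases eq_or_ne n (m+1) with rfl | hnm1
        · rw [hvm1, show m + 1 + 1 = m + 2 from rfl, hvm2]
          exact ht.2
        · rw [hv, Function.update_of_ne (by omega), Function.update_of_ne (by omega)]
          exact hw.2.1 (Nat.le_succ n)
    · intro n
      rcases eq_or_ne n (m+1) with rfl | hn
      · rw [hvm1]
        exact ⟨le_trans (hw.2.2 m).1 ht.1, le_trans ht.2 (hw.2.2 (m+2)).2⟩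
      · rw [hv, Function.update_of_ne hn]; exact hw.2.2 n
  -- terms away from m, m+1 agree
  have hagree : ∀ n, n ≠ m → n ≠ m+1 → tte Ψ β v n = tte Ψ β w n := by
    intro n h1 h2
    have e1 : v n = w n := Function.update_of_ne (by omega) _ _
    have e2 : v (n+1) = w (n+1) := Function.update_of_ne (by omega) _ _
    simp only [tte, e1, e2]
  -- split the sums
  have hsplit : ∀ u : ℕ → ℝ, Fe Ψ β u =
      tte Ψ β u m + (tte Ψ β u (m+1) +
        ∑' n, ite (n = m+1) 0 (ite (n = m) 0 (tte Ψ β u n))) := by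
    intro u
    rw [Fe, ENNReal.tsum_eq_add_tsum_ite m]
    congr 1
    rw [ENNReal.tsum_eq_add_tsum_ite (m+1)]
    congr 1
    · simp only [if_neg (show m + 1 ≠ m by omega)]
    · apply tsum_congr
      intro n
      by_cases h1 : n = m + 1 <;> by_cases h2 : n = m <;> simp [h1, h2]
  set S := ∑' n, ite (n = m+1) 0 (ite (n = m) 0 (tte Ψ β w n)) with hS
  have hSv : (∑' n, ite (n = m+1) 0 (ite (n = m) 0 (tte Ψ β v n))) = S := by
    rw [hS]
    apply tsum_congr
    intro n
    rcases eq_or_ne n (m+1) with rfl | h1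
    · simp
    · rcases eq_or_ne n m with rfl | h2
      · simp
      · simp only [if_neg h1, if_neg h2, hagree n h2 h1]
  have hle : tte Ψ β w m + (tte Ψ β w (m+1) + S) ≤ tte Ψ β v m + (tte Ψ β v (m+1) + S) := by
    have h1 := hmin v hvK
    rw [hsplit w, hsplit v, hSv] at h1
    exact h1
  have hSfin : S ≠ ⊤ := by
    intro hcon
    apply hfin
    rw [hsplit w, ← hS, hcon]
    simp
  have hle2 : tte Ψ β w m + tte Ψ β w (m+1) ≤ tte Ψ β v m + tte Ψ β v (m+1) := by
    have := hle
    rw [← add_assoc, ← add_assoc] at this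
    exact (ENNReal.add_le_add_iff_right hSfin).1 this
  -- translate to reals
  have hnn : ∀ (u : ℕ → ℝ) (n : ℕ), 0 ≤ Wf Ψ (u (n+1)) + β * (u (n+1) - u n)^2 :=
    fun u n => add_nonneg (hWnn _) (mul_nonneg hβ (sq_nonneg _))
  rw [tte, tte, tte, tte, ← ENNReal.ofReal_add (hnn w m) (hnn w (m+1)),
    ← ENNReal.ofReal_add (hnn v m) (hnn v (m+1)),
    ENNReal.ofReal_le_ofReal_iff (add_nonneg (hnn v m) (hnn v (m+1)))] at hle2
  rw [show m + 1 + 1 = m + 2 from rfl] at hle2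
  rw [hvm, hvm1, hvm2] at hle2
  nlinarith [hle2]

lemma quad_hasDerivAt (β a b t₀ : ℝ) :
    HasDerivAt (fun t => β * ((t - a)^2 + (b - t)^2)) (β * (2*(t₀-a) - 2*(b-t₀))) t₀ := by
  have ha := ((hasDerivAt_id t₀).sub_const a).pow 2
  have hb := ((hasDerivAt_id t₀).const_sub b).pow 2
  have h3 := (ha.add hb).const_mul β
  exact h3.congr_deriv (by simp only [id, Nat.cast_ofNat, Nat.add_one_sub_one, pow_one]; ring)

lemma exists_w (hβ : 0 < β)
    (hΨ : ContDiffOn ℝ 2 Ψ (Icc (0:ℝ) 1)) (hΨ1 : Ψ 1 = 1)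
    (hΨ'1 : derivWithin Ψ (Icc (0:ℝ) 1) 1 = 1)
    (hΨx : ∀ x ∈ Ico (0:ℝ) 1, x < Ψ x) :
    ∃ w : ℕ → ℝ, w 0 = 0 ∧ (∀ n, w n < w (n+1)) ∧ (∀ n, w n ∈ Icc (0:ℝ) 1) ∧
      (∀ n, w n < 1) ∧ Tendsto w atTop (𝓝 1) ∧
      ∀ m, derivWithin Ψ (Icc (0:ℝ) 1) ((w (m+1))^2) * (w (m+1)) - w (m+1) =
        β * (w (m+2) + w m - 2 * w (m+1)) := by
  classical
  have hWc : Continuous (Wf Ψ) := Wf_continuous hΨ.continuousOn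
  have hWnn : ∀ u, 0 ≤ Wf Ψ u := Wf_nonneg hΨ1 hΨx
  obtain ⟨w, hwK, hmin⟩ := lsc_exists_min Kset_isCompact ⟨vcomp, vcomp_mem⟩ (Fe_lsc Ψ β hWc)
  have hFele : Fe Ψ β w ≤ ENNReal.ofReal β := by
    rw [← Fe_vcomp Ψ β (Wf_one hΨ1)]; exact hmin vcomp vcomp_mem
  have hfin : Fe Ψ β w ≠ ⊤ := ne_top_of_le_ne_top ENNReal.ofReal_ne_top hFele
  have hw0 : w 0 = 0 := hwK.1
  have hmono : Monotone w := hwK.2.1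
  have hIcc : ∀ n, w n ∈ Icc (0:ℝ) 1 := hwK.2.2
  have hloc : ∀ m, IsMinOn (fun t => Wf Ψ t + β*((t - w m)^2 + (w (m+2) - t)^2))
      (Icc (w m) (w (m+2))) (w (m+1)) := by
    intro m
    rw [isMinOn_iff]
    intro t ht
    exact local_min hβ.le hWnn hwK hmin hfin m ht
  -- all values are < 1
  have hlt1 : ∀ n, w n < 1 := by
    by_contra hcon
    push_neg at hcon
    obtain ⟨k, hk⟩ := hcon
    have hex : ∃ n, w n = 1 := ⟨k, le_antisymm (hIcc k).2 hk⟩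
    obtain ⟨m, hm⟩ := Nat.exists_eq_succ_of_ne_zero
      (show Nat.find hex ≠ 0 by
        intro h
        have := Nat.find_spec hex
        rw [h, hw0] at this
        norm_num at this)
    have hwm1 : w (m+1) = 1 := by
      rw [show m + 1 = Nat.find hex by omega]; exact Nat.find_spec hex
    have hwm : w m < 1 := by
      have hne := Nat.find_min hex (show m < Nat.find hex by omega)
      exact lt_of_le_of_ne (hIcc m).2 hne
    have hwm2 : w (m+2) = 1 :=
      le_antisymm (hIcc (m+2)).2 (hwm1 ▸ hmono (by omega : m+1 ≤ m+2))
    have hWd : HasDerivWithinAt (Wf Ψ) 0 (Icc (0:ℝ) 1) 1 := Wf_hasDerivWithinAt_one hΨ hΨ'1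
    have hφ : HasDerivWithinAt (fun t => Wf Ψ t + β*((t - w m)^2 + (w (m+2) - t)^2))
        (0 + β*(2*(1 - w m) - 2*(w (m+2) - 1))) (Icc (w m) 1) 1 :=
      (hWd.mono (Icc_subset_Icc (hIcc m).1 le_rfl)).add
        (quad_hasDerivAt β (w m) (w (m+2)) 1).hasDerivWithinAt
    have hminφ : ∀ t ∈ Icc (w m) 1,
        (fun t => Wf Ψ t + β*((t - w m)^2 + (w (m+2) - t)^2)) 1 ≤
        (fun t => Wf Ψ t + β*((t - w m)^2 + (w (m+2) - t)^2)) t := by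
      intro t ht
      have h1 := isMinOn_iff.1 (hloc m) t (by rw [hwm2]; exact ht)
      rw [hwm1] at h1
      exact h1
    have hd := deriv_nonpos_of_min_left hwm hφ hminφ
    rw [hwm2] at hd
    nlinarith
  -- the first step is nontrivial
  have hw1 : 0 < w 1 := by
    rcases lt_or_eq_of_le (hIcc 1).1 with h | h
    · exact h
    exfalso
    set v : ℕ → ℝ := fun n => w (n+1) with hv
    have hvK : v ∈ Kset :=
      ⟨h.symm, fun i j hij => hmono (Nat.succ_le_succ hij), fun n => hIcc (n+1)⟩
    have hsplit : Fe Ψ β w = tte Ψ β w 0 + ∑' n, tte Ψ β w (n+1) := by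
      rw [Fe]
      exact tsum_eq_zero_add' ENNReal.summable
    have hFv : Fe Ψ β v = ∑' n, tte Ψ β w (n+1) := by
      apply tsum_congr
      intro n
      simp only [tte, hv]
    have hT : (∑' n, tte Ψ β w (n+1)) ≠ ⊤ := by
      intro hcon
      apply hfin
      rw [hsplit, hcon, add_top]
    have hle : tte Ψ β w 0 + ∑' n, tte Ψ β w (n+1) ≤ 0 + ∑' n, tte Ψ β w (n+1) := by
      rw [zero_add]
      calc tte Ψ β w 0 + ∑' n, tte Ψ β w (n+1) = Fe Ψ β w := hsplit.symm
        _ ≤ Fe Ψ β v := hmin v hvK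
        _ = ∑' n, tte Ψ β w (n+1) := hFv
    have h0 : tte Ψ β w 0 ≤ 0 := (ENNReal.add_le_add_iff_right hT).1 hle
    have hpos : 0 < Wf Ψ (w 1) + β * (w 1 - w 0)^2 := by
      rw [← h, hw0]
      simpa using Wf_pos hΨx (⟨le_refl (0:ℝ), one_pos⟩ : (0:ℝ) ∈ Ico (0:ℝ) 1)
    rw [tte] at h0
    exact absurd (le_antisymm h0 zero_le) (ENNReal.ofReal_pos.2 hpos).ne'
  -- convergence to 1
  have htends : Tendsto w atTop (𝓝 1) := by
    have hsum : Summable (fun n => (tte Ψ β w n).toReal) := ENNReal.summable_toReal hfin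
    have hto : Tendsto (fun n => (tte Ψ β w n).toReal) atTop (𝓝 0) := hsum.tendsto_atTop_zero
    have hWto : Tendsto (fun n => Wf Ψ (w (n+1))) atTop (𝓝 0) := by
      apply squeeze_zero (fun n => hWnn _) (fun n => ?_) hto
      rw [tte, ENNReal.toReal_ofReal (add_nonneg (hWnn _) (mul_nonneg hβ.le (sq_nonneg _)))]
      nlinarith [sq_nonneg (w (n+1) - w n), hβ.le,
        mul_nonneg hβ.le (sq_nonneg (w (n+1) - w n))]
    have hW0 : Tendsto (fun n => Wf Ψ (w n)) atTop (𝓝 0) := (tendsto_add_atTop_iff_nat 1).1 hWto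
    rw [Metric.tendsto_atTop]
    intro ε hε
    set δ := min ε 1 with hδdef
    have hδ0 : 0 < δ := lt_min hε one_pos
    have hδ1 : δ ≤ 1 := min_le_right _ _
    obtain ⟨x₀, hx₀, hminx⟩ := isCompact_Icc.exists_isMinOn
      (⟨0, by constructor <;> linarith⟩ : (Icc (0:ℝ) (1-δ)).Nonempty) hWc.continuousOn
    have hμ : 0 < Wf Ψ x₀ := Wf_pos hΨx ⟨hx₀.1, by linarith [hx₀.2]⟩
    obtain ⟨N, hN⟩ := (hW0.eventually_lt_const hμ).exists_forall_of_atTop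
    refine ⟨N, fun n hn => ?_⟩
    have hnot : w n ∉ Icc (0:ℝ) (1-δ) := by
      intro hmem
      exact absurd (isMinOn_iff.1 hminx (w n) hmem) (not_le.2 (hN n hn))
    have hgt : 1 - δ < w n := by
      by_contra hc
      exact hnot ⟨(hIcc n).1, not_lt.1 hc⟩
    have : |w n - 1| < δ := by
      rw [abs_lt]
      constructor <;> [linarith; linarith [hlt1 n]]
    calc dist (w n) 1 = |w n - 1| := rfl
      _ < δ := this
      _ ≤ ε := min_le_left _ _
  -- strict monotonicity
  have hstrict : ∀ n, w n < w (n+1) := by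
    intro n
    rcases lt_or_eq_of_le (hmono (Nat.le_succ n)) with hlt | heq
    · exact hlt
    exfalso
    set c := w n with hc
    have hc1 : c < 1 := hlt1 n
    have hc0 : 0 < c := by
      rcases Nat.eq_zero_or_pos n with rfl | hn
      · rw [heq, show Nat.succ 0 = 1 from rfl]; exact hw1
      · exact lt_of_lt_of_le hw1 (hmono hn)
    -- least index with value c
    have hexa : ∃ k, w k = c := ⟨n, rfl⟩
    set a := Nat.find hexa with hadef
    have haw : w a = c := Nat.find_spec hexa
    have han : a ≤ n := Nat.find_min' hexa rfl
    have ha0 : a ≠ 0 := by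
      intro h
      rw [h, hw0] at haw
      exact hc0.ne haw
    -- least index with value > c
    have hexb : ∃ k, c < w k := by
      obtain ⟨k, hk⟩ := (htends.eventually_const_lt hc1).exists
      exact ⟨k, hk⟩
    set b' := Nat.find hexb with hbdef
    have hb'w : c < w b' := Nat.find_spec hexb
    have hb'n : n + 1 < b' := by
      by_contra hcon
      have : w b' ≤ w (n+1) := hmono (by omega)
      rw [← heq] at this
      exact absurd this (not_le.2 hb'w)
    set b := b' - 1 with hbdef2
    have hab : a < b := by omega
    have hbw : w b = c := by
      have h1 : ¬ c < w b := Nat.find_min hexb (by omega)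
      have h2 : c ≤ w b := haw ▸ hmono (by omega : a ≤ b)
      exact le_antisymm (not_lt.1 h1) h2
    have hwa1 : w (a+1) = c := by
      have h1 : w (a+1) ≤ c := hbw ▸ hmono (by omega : a+1 ≤ b)
      have h2 : c ≤ w (a+1) := haw ▸ hmono (Nat.le_succ a)
      exact le_antisymm h1 h2
    have hwb1 : w (b-1) = c := by
      have h1 : w (b-1) ≤ c := hbw ▸ hmono (by omega : b-1 ≤ b)
      have h2 : c ≤ w (b-1) := haw ▸ hmono (by omega : a ≤ b-1)
      exact le_antisymm h1 h2
    obtain ⟨p, hp⟩ := Nat.exists_eq_succ_of_ne_zero ha0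
    obtain ⟨q, hq⟩ := Nat.exists_eq_succ_of_ne_zero (show b ≠ 0 by omega)
    have hcIoo : c ∈ Ioo (0:ℝ) 1 := ⟨hc0, hc1⟩
    set D := derivWithin Ψ (Icc (0:ℝ) 1) (c^2) * (2*c) - 2*c with hD
    have hWder : HasDerivAt (Wf Ψ) D c := Wf_hasDerivAt hΨ hcIoo
    -- left variation at a = p+1
    have hppc : w p < c := by
      have h1 : w p ≤ c := haw ▸ hmono (by omega : p ≤ a)
      have h2 : w p ≠ c := Nat.find_min hexa (by omega : p < a)
      exact lt_of_le_of_ne h1 h2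
    have hp1 : w (p+1) = c := by rw [show p + 1 = a by omega]; exact haw
    have hp2 : w (p+2) = c := by
      have : p + 2 = a + 1 := by omega
      rw [this]; exact hwa1
    have hmin1 : ∀ t ∈ Icc (w p) c,
        (fun t => Wf Ψ t + β*((t - w p)^2 + (c - t)^2)) c ≤
        (fun t => Wf Ψ t + β*((t - w p)^2 + (c - t)^2)) t := by
      intro t ht
      have h1 := isMinOn_iff.1 (hloc p) t (by rw [hp2]; exact ht)
      rw [hp1, hp2] at h1
      exact h1
    have hd1 := deriv_nonpos_of_min_left hppc
      ((hWder.add (quad_hasDerivAt β (w p) c c)).hasDerivWithinAt) hmin1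
    -- right variation at b = q+1
    have hq1 : w (q+1) = c := by rw [show q + 1 = b by omega]; exact hbw
    have hq0 : w q = c := by
      have : q = b - 1 := by omega
      rw [this]; exact hwb1
    have hq2 : c < w (q+2) := by
      have : q + 2 = b' := by omega
      rw [this]; exact hb'w
    have hmin2 : ∀ t ∈ Icc c (w (q+2)),
        (fun t => Wf Ψ t + β*((t - c)^2 + (w (q+2) - t)^2)) c ≤
        (fun t => Wf Ψ t + β*((t - c)^2 + (w (q+2) - t)^2)) t := by
      intro t ht
      have h1 := isMinOn_iff.1 (hloc q) t (by rw [hq0]; exact ht)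
      rw [hq0, hq1] at h1
      exact h1
    have hd2 := deriv_nonneg_of_min_right hq2
      ((hWder.add (quad_hasDerivAt β c (w (q+2)) c)).hasDerivWithinAt) hmin2
    nlinarith [hd1, hd2, hq2, hppc, hβ]
  -- Euler-Lagrange equation
  refine ⟨w, hw0, hstrict, hIcc, hlt1, htends, ?_⟩
  intro m
  have hc0 : 0 < w (m+1) := by
    rw [← hw0]
    exact lt_of_le_of_lt (hmono (Nat.zero_le m)) (hstrict m)
  have hcIoo : w (m+1) ∈ Ioo (0:ℝ) 1 := ⟨hc0, hlt1 (m+1)⟩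
  have hWder := Wf_hasDerivAt hΨ hcIoo
  have hq := quad_hasDerivAt β (w m) (w (m+2)) (w (m+1))
  have hlm := (hloc m).isLocalMin (Icc_mem_nhds (hstrict m) (hstrict (m+1)))
  have hzero := hlm.hasDerivAt_eq_zero (hWder.add hq)
  linear_combination hzero / 2

end main

/-- existence of heteroclinic standing waves with odd, strictly
increasing profile for the normalized defocussing DNLS equation. -/
theorem stmt6 (Ψ : ℝ → ℝ) (β : ℝ) (hβ : 0 < β)
    (hΨ : ContDiffOn ℝ 2 Ψ (Set.Icc (0 : ℝ) 1))
    (hΨ1 : Ψ 1 = 1) (hΨ'1 : derivWithin Ψ (Set.Icc (0 : ℝ) 1) 1 = 1)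
    (hΨ''1 : 0 < derivWithin (derivWithin Ψ (Set.Icc (0 : ℝ) 1)) (Set.Icc (0 : ℝ) 1) 1)
    (hΨx : ∀ x ∈ Set.Ico (0 : ℝ) 1, x < Ψ x) :
    ∃ u : ℤ → ℝ,
      (∀ j, u (-j) = - u j) ∧ StrictMono u ∧ (∀ j, u j ∈ Set.Ioo (-1 : ℝ) 1) ∧
      Tendsto u atTop (nhds 1) ∧ Tendsto u atBot (nhds (-1)) ∧
      ∀ j : ℤ, derivWithin Ψ (Set.Icc (0 : ℝ) 1) (u j ^ 2) * u j - u j =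
        β * (u (j + 1) + u (j - 1) - 2 * u j) := by
  classical
  obtain ⟨w, hw0, hstrict, hIcc, hlt1, htends, hEL⟩ := exists_w hβ hΨ hΨ1 hΨ'1 hΨx
  have hsm : StrictMono w := strictMono_nat_of_lt_succ hstrict
  set u : ℤ → ℝ := fun j => if 0 ≤ j then w j.toNat else - w (-j).toNat with hu
  have huval : ∀ m : ℕ, u (m : ℤ) = w m := by
    intro m
    rw [hu]
    simp
  have hneg' : ∀ m : ℕ, u (-(m : ℤ)) = - w m := by
    intro m
    rcases Nat.eq_zero_or_pos m with rfl | hm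
    · simpa [hw0] using huval 0
    · rw [hu]
      have h1 : ¬ (0:ℤ) ≤ -(m:ℤ) := by omega
      have h2 : (-(-(m:ℤ))).toNat = m := by omega
      simp only [if_neg h1, h2]
  have hodd : ∀ j, u (-j) = - u j := by
    intro j
    rcases le_or_gt 0 j with h | h
    · obtain ⟨m, rfl⟩ := Int.eq_ofNat_of_zero_le h
      rw [huval, hneg']
    · obtain ⟨m, hm⟩ : ∃ m : ℕ, j = -(m:ℤ) := ⟨(-j).toNat, by omega⟩
      rw [hm, neg_neg, huval, hneg', neg_neg]
  have humono : StrictMono u := by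
    apply strictMono_int_of_lt_succ
    intro j
    rcases le_or_gt 0 j with h | h
    · obtain ⟨m, rfl⟩ := Int.eq_ofNat_of_zero_le h
      have h1 : (m:ℤ) + 1 = ((m+1 : ℕ) : ℤ) := by push_cast; ring
      rw [h1, huval, huval]
      exact hstrict m
    · obtain ⟨m, hm⟩ : ∃ m : ℕ, j = -((m+1:ℕ):ℤ) := ⟨(-j-1).toNat, by omega⟩
      have h1 : j + 1 = -((m:ℕ):ℤ) := by omega
      rw [h1, hm, hneg', hneg']
      simp only [neg_lt_neg_iff]
      exact hstrict m
  have humem : ∀ j, u j ∈ Ioo (-1:ℝ) 1 := by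
    intro j
    rcases le_or_gt 0 j with h | h
    · obtain ⟨m, rfl⟩ := Int.eq_ofNat_of_zero_le h
      rw [huval]
      exact ⟨lt_of_lt_of_le (by norm_num) (hIcc m).1, hlt1 m⟩
    · obtain ⟨m, hm⟩ : ∃ m : ℕ, j = -((m:ℕ):ℤ) := ⟨(-j).toNat, by omega⟩
      rw [hm, hneg']
      constructor
      · simpa using hlt1 m
      · have := (hIcc m).1
        linarith
  have htop : Tendsto u atTop (𝓝 1) := by
    have h1 : Tendsto (fun j : ℤ => j.toNat) atTop atTop := by
      apply tendsto_atTop_atTop.2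
      intro b
      exact ⟨(b:ℤ), fun a ha => by omega⟩
    apply (htends.comp h1).congr'
    filter_upwards [eventually_ge_atTop (0:ℤ)] with j hj
    rw [hu]
    simp only [Function.comp_apply, if_pos hj]
  have hbot : Tendsto u atBot (𝓝 (-1)) := by
    have h1 : Tendsto (fun j : ℤ => (-j).toNat) atBot atTop := by
      apply tendsto_atTop.2
      intro b
      filter_upwards [eventually_le_atBot (-(b:ℤ))] with j hj
      omega
    have h2 := (htends.comp h1).neg
    apply h2.congr'
    filter_upwards [eventually_le_atBot (-1:ℤ)] with j hj
    have hj0 : ¬ (0:ℤ) ≤ j := by omega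
    rw [hu]
    simp only [Function.comp_apply, if_neg hj0]
  refine ⟨u, hodd, humono, humem, htop, hbot, ?_⟩
  intro j
  rcases lt_trichotomy j 0 with h | h | h
  · -- j ≤ -1
    obtain ⟨m, hm⟩ : ∃ m : ℕ, j = -((m+1:ℕ):ℤ) := ⟨(-j-1).toNat, by omega⟩
    have e0 : u j = - w (m+1) := by
      rw [hm]; exact hneg' (m+1)
    have e1 : u (j+1) = - w m := by
      have : j + 1 = -((m:ℕ):ℤ) := by omega
      rw [this]; exact hneg' m
    have e2 : u (j-1) = - w (m+2) := by
      have : j - 1 = -((m+2:ℕ):ℤ) := by omega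
      rw [this]; exact hneg' (m+2)
    rw [e0, e1, e2, neg_sq]
    linear_combination - hEL m
  · -- j = 0
    subst h
    have e0 : u 0 = w 0 := huval 0
    have e1 : u (0+1) = w 1 := by
      rw [show (0:ℤ)+1 = ((1:ℕ):ℤ) from rfl]; exact huval 1
    have e2 : u (0-1) = - w 1 := by
      rw [show (0:ℤ)-1 = -((1:ℕ):ℤ) from rfl]; exact hneg' 1
    rw [e0, e1, e2, hw0]
    ring
  · -- j ≥ 1
    obtain ⟨m, hm⟩ : ∃ m : ℕ, j = ((m+1:ℕ):ℤ) := ⟨(j-1).toNat, by omega⟩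
    have e0 : u j = w (m+1) := by rw [hm]; exact huval (m+1)
    have e1 : u (j+1) = w (m+2) := by
      have : j + 1 = ((m+2:ℕ):ℤ) := by omega
      rw [this]; exact huval (m+2)
    have e2 : u (j-1) = w m := by
      have : j - 1 = ((m:ℕ):ℤ) := by omega
      rw [this]; exact huval m
    rw [e0, e1, e2]
    linear_combination hEL m
end

section
/- Let $u : \mathbb{Z} \to (-1,1)$ be strictly increasing, odd, with $u_j \to 1$ as $j \to \infty$, solving $F'(u_j) = 2\beta(u_{j+1}+u_{j-1}-2u_j)$ where $F \in C^2$, $F(1) = F'(1) = 0$, $F''(1) > 0$, and $\beta > 0$. Let $\lambda > 0$ be the unique positive solution of $4\beta(\cosh\lambda - 1) = F''(1)$. Then for any $0 < \underline{\lambda} < \lambda < \overline{\lambda}$ there exist constants $\underline{c}, \overline{c} > 0$ such that $\underline{c}\, e^{-\overline{\lambda}|j|} \leq |\mathrm{sgn}(j) - u_j| \leq \overline{c}\, e^{-\underline{\lambda}|j|}$ for all $j \in \mathbb{Z}$. -/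
open Filter

/-- sign of an integer index: `1` for `j ≥ 0`, `-1` for `j < 0`. -/
noncomputable def sgnZ (j : ℤ) : ℝ := if 0 ≤ j then 1 else -1

set_option maxHeartbeats 2000000 in
/-- exponential decay of heteroclinic standing wave profiles towards
their asymptotic states, with rate determined by `4β(cosh λ - 1) = F''(1)`. -/
theorem stmt7 (F : ℝ → ℝ) (β : ℝ) (hβ : 0 < β)
    (hF : ContDiff ℝ 2 F)
    (hF1 : F 1 = 0) (hF'1 : deriv F 1 = 0) (hF''1 : 0 < deriv (deriv F) 1)
    (u : ℤ → ℝ) (hmono : StrictMono u)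
    (hodd : ∀ j, u (-j) = - u j)
    (hval : ∀ j, u j ∈ Set.Ioo (-1 : ℝ) 1)
    (hlim : Tendsto u atTop (nhds 1))
    (heq : ∀ j : ℤ, deriv F (u j) = 2 * β * (u (j + 1) + u (j - 1) - 2 * u j))
    (lam : ℝ) (hlam : 0 < lam)
    (hlameq : 4 * β * (Real.cosh lam - 1) = deriv (deriv F) 1) :
    ∀ lam₁ lam₂ : ℝ, 0 < lam₁ → lam₁ < lam → lam < lam₂ →
      ∃ c₁ > (0 : ℝ), ∃ c₂ > (0 : ℝ), ∀ j : ℤ,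
        c₁ * Real.exp (-lam₂ * |(j : ℝ)|) ≤ |sgnZ j - u j| ∧
        |sgnZ j - u j| ≤ c₂ * Real.exp (-lam₁ * |(j : ℝ)|) := by
  intro lam₁ lam₂ hl1 hl1l hl2
  set v : ℤ → ℝ := fun j => 1 - u j with hvdef
  have hv_pos : ∀ j : ℤ, 0 < v j := fun j => by
    have := (hval j).2; simp only [hvdef]; linarith
  have hv_lt2 : ∀ j : ℤ, v j < 2 := fun j => by
    have := (hval j).1; simp only [hvdef]; linarith
  have hv_anti : ∀ j : ℤ, v (j + 1) < v j := fun j => by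
    have := hmono (lt_add_one j); simp only [hvdef]; linarith
  set κ : ℤ → ℝ := fun j => v (j + 1) / v j with hκdef
  have hκ_pos : ∀ j, 0 < κ j := fun j => div_pos (hv_pos _) (hv_pos _)
  have hκ_lt1 : ∀ j, κ j < 1 := fun j => (div_lt_one (hv_pos j)).2 (hv_anti j)
  set a : ℤ → ℝ := fun j => 2 + slope (deriv F) 1 (u j) / (2 * β) with hadef
  -- the discrete equation in terms of v
  have hrec : ∀ j : ℤ, v (j + 1) + v (j - 1) = a j * v j := by
    intro j
    simp only [hadef, hvdef]
    rw [slope_def_field, hF'1]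
    have h1 : u j - 1 ≠ 0 := by have := (hval j).2; intro h; rw [sub_eq_zero] at h; linarith
    field_simp
    linear_combination (u j - 1) * heq j
  -- the Riccati recursion for κ
  have hκrec : ∀ j : ℤ, κ (j + 1) = a (j + 1) - (κ j)⁻¹ := by
    intro j
    have h := hrec (j + 1)
    rw [show j + 1 - 1 = j from by ring] at h
    simp only [hκdef]
    rw [inv_div, eq_sub_iff_add_eq, ← add_div, div_eq_iff (hv_pos (j + 1)).ne']
    linarith [h]
  -- second derivative of F at 1
  have hderiv2 : HasDerivAt (deriv F) (deriv (deriv F) 1) 1 := by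
    have h1 : ContDiff ℝ 1 (deriv F) :=
      (contDiff_succ_iff_deriv.mp (show ContDiff ℝ (1 + 1 : ℕ) F by exact_mod_cast hF)).2.2
    exact ((h1.differentiable one_ne_zero) 1).hasDerivAt
  -- convergence of the coefficients a j → 2 cosh lam
  have hslope : Tendsto (fun j : ℤ => slope (deriv F) 1 (u j)) atTop
      (nhds (deriv (deriv F) 1)) := by
    refine (hasDerivAt_iff_tendsto_slope.mp hderiv2).comp ?_
    rw [tendsto_nhdsWithin_iff]
    exact ⟨hlim, Eventually.of_forall fun j => ne_of_lt (hval j).2⟩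
  have hA : Tendsto a atTop (nhds (2 * Real.cosh lam)) := by
    have hkey : 2 + (deriv (deriv F) 1) / (2 * β) = 2 * Real.cosh lam := by
      rw [← hlameq]; field_simp; ring
    rw [← hkey]
    exact tendsto_const_nhds.add (hslope.div_const _)
  clear_value v κ a
  have hcosh1 : 2 * Real.cosh lam₁ < 2 * Real.cosh lam := by
    have : Real.cosh lam₁ < Real.cosh lam := by
      rw [Real.cosh_lt_cosh, abs_of_pos hl1, abs_of_pos hlam]; exact hl1l
    linarith
  have hcosh2 : 2 * Real.cosh lam < 2 * Real.cosh lam₂ := by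
    have : Real.cosh lam < Real.cosh lam₂ := by
      rw [Real.cosh_lt_cosh, abs_of_pos hlam, abs_of_pos (hlam.trans hl2)]; exact hl2
    linarith
  obtain ⟨N₀, hN₀⟩ := ((hA.eventually (eventually_gt_nhds hcosh1)).and
      (hA.eventually (eventually_lt_nhds hcosh2))).exists_forall_of_atTop
  set N : ℕ := N₀.toNat with hNdef
  have hNa : ∀ j : ℤ, (N : ℤ) ≤ j → 2 * Real.cosh lam₁ ≤ a j ∧ a j ≤ 2 * Real.cosh lam₂ := by
    intro j hj
    have hj' : N₀ ≤ j := le_trans (Int.self_le_toNat N₀) hj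
    exact ⟨(hN₀ j hj').1.le, (hN₀ j hj').2.le⟩
  clear_value N
  -- hyperbolic identities
  have hch1 : 2 * Real.cosh lam₁ = Real.exp lam₁ + Real.exp (-lam₁) := by
    rw [Real.cosh_eq]; ring
  have hch2 : 2 * Real.cosh lam₂ = Real.exp lam₂ + Real.exp (-lam₂) := by
    rw [Real.cosh_eq]; ring
  have hee1 : Real.exp lam₁ * Real.exp (-lam₁) = 1 := by rw [← Real.exp_add]; simp
  have hee2 : Real.exp lam₂ * Real.exp (-lam₂) = 1 := by rw [← Real.exp_add]; simp
  have h1lt : 1 < Real.exp lam₁ := Real.one_lt_exp_iff.mpr hl1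
  have hl2' : 0 < lam₂ := (hl1.trans hl1l).trans hl2
  have h2lt : 1 < Real.exp lam₂ := Real.one_lt_exp_iff.mpr hl2'
  -- eventual upper bound on κ
  have hup : ∀ j : ℤ, (N : ℤ) ≤ j → κ j ≤ Real.exp (-lam₁) := by
    intro J hJ
    by_contra hc
    push_neg at hc
    set c : ℝ := κ J with hcdef
    have hc0 : 0 < c := hκ_pos J
    have hc1 : c < 1 := hκ_lt1 J
    set ε : ℝ := 2 * Real.cosh lam₁ - c - c⁻¹ with hεdef
    have hε : 0 < ε := by
      have h3 : Real.exp (-lam₁) < c := hc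
      have h4 : c < Real.exp lam₁ := hc1.trans h1lt
      rw [hεdef, hch1]
      nlinarith [mul_pos (sub_pos.2 h3) (sub_pos.2 h4), mul_inv_cancel₀ hc0.ne', hc0]
    clear_value ε c
    have key : ∀ k : ℕ, c + (k : ℝ) * ε ≤ κ (J + (k : ℤ)) := by
      intro k
      induction k with
      | zero => simp [hcdef]
      | succ k ih =>
        have hx0 : 0 < κ (J + (k : ℤ)) := hκ_pos _
        have hx1 : κ (J + (k : ℤ)) < 1 := hκ_lt1 _
        have hk0 : (0 : ℝ) ≤ (k : ℝ) := Nat.cast_nonneg k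
        have hxc : c ≤ κ (J + (k : ℤ)) := by nlinarith
        have hcx : 0 < c * κ (J + (k : ℤ)) := mul_pos hc0 hx0
        have hfac : 0 ≤ (κ (J + (k : ℤ)) - c) * (1 - c * κ (J + (k : ℤ))) :=
          mul_nonneg (by linarith) (by nlinarith)
        have hmono' : κ (J + (k : ℤ)) + (κ (J + (k : ℤ)))⁻¹ ≤ c + c⁻¹ := by
          rw [← mul_le_mul_iff_of_pos_right hcx]
          have e1 : (κ (J + (k : ℤ)))⁻¹ * (c * κ (J + (k : ℤ))) = c := by
            field_simp
          have e2 : c⁻¹ * (c * κ (J + (k : ℤ))) = κ (J + (k : ℤ)) := by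
            field_simp
          nlinarith [hfac]
        have ha1 : 2 * Real.cosh lam₁ ≤ a ((J + (k : ℤ)) + 1) := (hNa _ (by omega)).1
        push_cast
        rw [show J + ((k : ℤ) + 1) = (J + (k : ℤ)) + 1 from by ring, hκrec (J + (k : ℤ))]
        linarith
    obtain ⟨k, hk⟩ := exists_nat_gt ((1 - c) / ε)
    rw [div_lt_iff₀ hε] at hk
    have h6 := key k
    have h7 := hκ_lt1 (J + (k : ℤ))
    linarith
  -- eventual lower bound on κ
  have hlo : ∀ j : ℤ, (N : ℤ) ≤ j → Real.exp (-lam₂) ≤ κ j := by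
    intro J hJ
    by_contra hc
    push_neg at hc
    set c : ℝ := κ J with hcdef
    have hc0 : 0 < c := hκ_pos J
    have hc1 : c < 1 := hκ_lt1 J
    set ε : ℝ := c + c⁻¹ - 2 * Real.cosh lam₂ with hεdef
    have hε : 0 < ε := by
      have h3 : c < Real.exp (-lam₂) := hc
      have h4 : c < Real.exp lam₂ := by
        have : Real.exp (-lam₂) < Real.exp lam₂ := by
          apply Real.exp_lt_exp.mpr; nlinarith
        linarith
      rw [hεdef, hch2]
      nlinarith [mul_pos (sub_pos.2 h3) (sub_pos.2 h4), mul_inv_cancel₀ hc0.ne', hc0]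
    clear_value ε c
    have key : ∀ k : ℕ, κ (J + (k : ℤ)) ≤ c - (k : ℝ) * ε := by
      intro k
      induction k with
      | zero => simp [hcdef]
      | succ k ih =>
        have hx0 : 0 < κ (J + (k : ℤ)) := hκ_pos _
        have hk0 : (0 : ℝ) ≤ (k : ℝ) := Nat.cast_nonneg k
        have hxc : κ (J + (k : ℤ)) ≤ c := by nlinarith
        have hcx : 0 < c * κ (J + (k : ℤ)) := mul_pos hc0 hx0
        have hfac : 0 ≤ (c - κ (J + (k : ℤ))) * (1 - c * κ (J + (k : ℤ))) :=
          mul_nonneg (by linarith) (by nlinarith)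
        have hmono' : c + c⁻¹ ≤ κ (J + (k : ℤ)) + (κ (J + (k : ℤ)))⁻¹ := by
          rw [← mul_le_mul_iff_of_pos_right hcx]
          have e1 : (κ (J + (k : ℤ)))⁻¹ * (c * κ (J + (k : ℤ))) = c := by
            field_simp
          have e2 : c⁻¹ * (c * κ (J + (k : ℤ))) = κ (J + (k : ℤ)) := by
            field_simp
          nlinarith [hfac]
        have ha1 : a ((J + (k : ℤ)) + 1) ≤ 2 * Real.cosh lam₂ := (hNa _ (by omega)).2
        push_cast
        rw [show J + ((k : ℤ) + 1) = (J + (k : ℤ)) + 1 from by ring, hκrec (J + (k : ℤ))]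
        linarith
    obtain ⟨k, hk⟩ := exists_nat_gt (c / ε)
    rw [div_lt_iff₀ hε] at hk
    have h6 := key k
    have h7 := hκ_pos (J + (k : ℤ))
    linarith
  -- geometric bounds on v for indices ≥ N
  have hvb : ∀ k : ℕ, v ((N : ℤ) + (k : ℤ)) ≤ v (N : ℤ) * Real.exp (-(lam₁ * (k : ℝ))) ∧
      v (N : ℤ) * Real.exp (-(lam₂ * (k : ℝ))) ≤ v ((N : ℤ) + (k : ℤ)) := by
    intro k
    induction k with
    | zero => simp
    | succ k ih =>
      have hveq : v (((N : ℤ) + (k : ℤ)) + 1) = κ ((N : ℤ) + (k : ℤ)) * v ((N : ℤ) + (k : ℤ)) := by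
        simp only [hκdef]
        rw [div_mul_cancel₀ _ (hv_pos _).ne']
      have h1 : κ ((N : ℤ) + (k : ℤ)) ≤ Real.exp (-lam₁) := hup _ (by omega)
      have h2 : Real.exp (-lam₂) ≤ κ ((N : ℤ) + (k : ℤ)) := hlo _ (by omega)
      constructor
      · have hm := mul_le_mul h1 ih.1 (hv_pos _).le (Real.exp_nonneg _)
        push_cast
        rw [show (N : ℤ) + ((k : ℤ) + 1) = ((N : ℤ) + (k : ℤ)) + 1 from by ring, hveq]
        calc κ ((N : ℤ) + (k : ℤ)) * v ((N : ℤ) + (k : ℤ))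
            ≤ Real.exp (-lam₁) * (v (N : ℤ) * Real.exp (-(lam₁ * (k : ℝ)))) := hm
          _ = v (N : ℤ) * Real.exp (-(lam₁ * ((k : ℝ) + 1))) := by
              rw [show -(lam₁ * ((k : ℝ) + 1)) = -lam₁ + -(lam₁ * (k : ℝ)) from by ring,
                Real.exp_add]
              ring
      · have hm := mul_le_mul h2 ih.2 (mul_nonneg (hv_pos _).le (Real.exp_nonneg _)) (hκ_pos _).le
        push_cast
        rw [show (N : ℤ) + ((k : ℤ) + 1) = ((N : ℤ) + (k : ℤ)) + 1 from by ring, hveq]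
        calc v (N : ℤ) * Real.exp (-(lam₂ * ((k : ℝ) + 1)))
            = Real.exp (-lam₂) * (v (N : ℤ) * Real.exp (-(lam₂ * (k : ℝ)))) := by
              rw [show -(lam₂ * ((k : ℝ) + 1)) = -lam₂ + -(lam₂ * (k : ℝ)) from by ring,
                Real.exp_add]
              ring
          _ ≤ κ ((N : ℤ) + (k : ℤ)) * v ((N : ℤ) + (k : ℤ)) := hm
  -- assemble the final constants
  refine ⟨v (N : ℤ), hv_pos _, 2 * Real.exp (lam₁ * (N : ℝ)), by positivity, fun j => ?_⟩
  have habs : |sgnZ j - u j| = v |j| := by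
    by_cases hj : 0 ≤ j
    · have h1 : sgnZ j = 1 := by simp [sgnZ, hj]
      have h2 : (1 : ℝ) - u j = v j := by rw [hvdef]
      rw [h1, abs_of_nonneg hj, h2]
      exact abs_of_pos (hv_pos j)
    · push_neg at hj
      have h1 : sgnZ j = -1 := by simp [sgnZ, not_le.mpr hj]
      rw [h1, abs_of_neg hj]
      have h2 : (-1 : ℝ) - u j = -(v (-j)) := by
        simp only [hvdef, hodd j]; ring
      rw [h2, abs_neg]
      exact abs_of_pos (hv_pos _)
  rw [habs, ← Int.cast_abs]
  set m : ℤ := |j| with hm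
  have hm0 : 0 ≤ m := abs_nonneg j
  have hmr0 : (0 : ℝ) ≤ (m : ℝ) := by exact_mod_cast hm0
  clear_value m
  by_cases hNm : (N : ℤ) ≤ m
  · set k : ℕ := (m - (N : ℤ)).toNat with hk
    have hk' : (N : ℤ) + (k : ℤ) = m := by
      rw [hk, Int.toNat_of_nonneg (by omega)]; ring
    clear_value k
    have hkr : (k : ℝ) = (m : ℝ) - (N : ℝ) := by
      have : ((N : ℤ) + (k : ℤ) : ℤ) = m := hk'
      have h9 : (((N : ℤ) + (k : ℤ) : ℤ) : ℝ) = ((m : ℤ) : ℝ) := by exact_mod_cast this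
      push_cast at h9
      linarith
    have hb := hvb k
    rw [hk'] at hb
    constructor
    · have h5 : Real.exp (-(lam₂ * (k : ℝ))) =
          Real.exp (lam₂ * (N : ℝ)) * Real.exp (-lam₂ * (m : ℝ)) := by
        rw [← Real.exp_add]; congr 1; rw [hkr]; ring
      have h6 : (1 : ℝ) ≤ Real.exp (lam₂ * (N : ℝ)) :=
        Real.one_le_exp (mul_nonneg hl2'.le (Nat.cast_nonneg N))
      have h7 := hb.2
      rw [h5] at h7
      have h8 : 0 ≤ (v (N : ℤ) * Real.exp (-lam₂ * (m : ℝ))) * (Real.exp (lam₂ * (N : ℝ)) - 1) :=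
        mul_nonneg (mul_nonneg (hv_pos _).le (Real.exp_nonneg _)) (by linarith)
      linarith [h7, h8]
    · have h5 : Real.exp (-(lam₁ * (k : ℝ))) =
          Real.exp (lam₁ * (N : ℝ)) * Real.exp (-lam₁ * (m : ℝ)) := by
        rw [← Real.exp_add]; congr 1; rw [hkr]; ring
      have h7 := hb.1
      rw [h5] at h7
      have h8 : 0 ≤ (2 - v (N : ℤ)) * (Real.exp (lam₁ * (N : ℝ)) * Real.exp (-lam₁ * (m : ℝ))) :=
        mul_nonneg (by linarith [hv_lt2 (N : ℤ)]) (by positivity)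
      linarith [h7, h8]
  · push_neg at hNm
    have hmN : (m : ℝ) ≤ (N : ℝ) := by exact_mod_cast hNm.le
    have h7 : v (N : ℤ) ≤ v m := by
      have h := hmono.monotone hNm.le
      simp only [hvdef]
      linarith
    constructor
    · have h6 : Real.exp (-lam₂ * (m : ℝ)) ≤ 1 := by
        apply Real.exp_le_one_iff.mpr
        nlinarith [mul_nonneg hl2'.le hmr0]
      have h8 : 0 ≤ v (N : ℤ) * (1 - Real.exp (-lam₂ * (m : ℝ))) :=
        mul_nonneg (hv_pos _).le (by linarith)
      linarith [h7, h8]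
    · have h6 : (1 : ℝ) ≤ Real.exp (lam₁ * (N : ℝ)) * Real.exp (-lam₁ * (m : ℝ)) := by
        rw [← Real.exp_add]
        apply Real.one_le_exp
        nlinarith [mul_nonneg hl1.le (sub_nonneg.2 hmN)]
      linarith [hv_lt2 m, h6]
end

section
/- Let $F:[-1,1]\to[0,\infty)$ be continuous with $F>0$ on $(-1,1)$, $F(\pm1)=0$, $\beta>0$, and let $\mathcal{M}_N = \{u \in \mathcal{M} : u_j = \mathrm{sgn}(j) \text{ for } |j| > N\}$. Then $\min_{\mathcal{M}_N} \mathcal{E} \to \min_{\mathcal{M}} \mathcal{E}$ as $N \to \infty$, and the sequence $N \mapsto \min_{\mathcal{M}_N}\mathcal{E}$ is nonincreasing. -/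
open Filter
open scoped ENNReal

/-- the Ritz set `𝓜_N` of profiles agreeing with the shock profile for `|j| > N`. -/
noncomputable def IsMN (N : ℕ) (u : ℤ → ℝ) : Prop :=
  IsM u ∧ ∀ j : ℤ, (N : ℤ) < |j| → u j = sgnZ j

/- ### auxiliary definitions and lemmas -/

/-- truncation of a profile at level `N`. -/
noncomputable def trunc (N : ℕ) (u : ℤ → ℝ) : ℤ → ℝ :=
  fun j => if j < -(N:ℤ) then -1 else if (N:ℤ) < j then 1 else u j

lemma trunc_of_lt {N : ℕ} {u : ℤ → ℝ} {j : ℤ} (h : j < -(N:ℤ)) : trunc N u j = -1 := by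
  simp [trunc, h]

lemma trunc_of_gt {N : ℕ} {u : ℤ → ℝ} {j : ℤ} (h : (N:ℤ) < j) : trunc N u j = 1 := by
  have : ¬ j < -(N:ℤ) := by omega
  simp [trunc, this, h]

lemma trunc_of_mem {N : ℕ} {u : ℤ → ℝ} {j : ℤ} (h1 : -(N:ℤ) ≤ j) (h2 : j ≤ N) :
    trunc N u j = u j := by
  have h1' : ¬ j < -(N:ℤ) := by omega
  have h2' : ¬ (N:ℤ) < j := by omega
  simp [trunc, h1', h2']

lemma isMN_trunc {N : ℕ} {u : ℤ → ℝ} (hu : IsM u) : IsMN N (trunc N u) := by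
  obtain ⟨hodd, hmono, hbd⟩ := hu
  refine ⟨⟨?_, ?_, ?_⟩, ?_⟩
  · intro j
    rcases lt_trichotomy j (-(N:ℤ)) with h | h | h
    · rw [trunc_of_lt h, trunc_of_gt (by omega)]; ring
    · subst h
      rw [trunc_of_mem (by omega) (by omega), trunc_of_mem (by omega) (by omega)]
      exact hodd _
    · rcases le_or_gt j (N:ℤ) with h2 | h2
      · rw [trunc_of_mem (by omega) (by omega), trunc_of_mem (by omega) h2]
        exact hodd _
      · rw [trunc_of_gt h2, trunc_of_lt (by omega)]
  · intro j k hjk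
    rcases lt_or_ge j (-(N:ℤ)) with h | h
    · rw [trunc_of_lt h]
      rcases lt_or_ge k (-(N:ℤ)) with h2 | h2
      · rw [trunc_of_lt h2]
      · rcases le_or_gt k (N:ℤ) with h3 | h3
        · rw [trunc_of_mem h2 h3]; exact (hbd k).1
        · rw [trunc_of_gt h3]; norm_num
    · rcases lt_or_ge (N:ℤ) k with h2 | h2
      · rw [trunc_of_gt h2]
        rcases lt_or_ge (N:ℤ) j with h3 | h3
        · rw [trunc_of_gt h3]
        · rw [trunc_of_mem h h3]; exact (hbd j).2
      · rw [trunc_of_mem h (hjk.trans h2), trunc_of_mem (h.trans hjk) h2]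
        exact hmono hjk
  · intro j
    rcases lt_or_ge j (-(N:ℤ)) with h | h
    · rw [trunc_of_lt h]; constructor <;> norm_num
    · rcases lt_or_ge (N:ℤ) j with h2 | h2
      · rw [trunc_of_gt h2]; constructor <;> norm_num
      · rw [trunc_of_mem h h2]; exact hbd j
  · intro j hj
    rcases le_or_gt 0 j with h | h
    · rw [abs_of_nonneg h] at hj
      rw [trunc_of_gt hj, sgnZ, if_pos h]
    · rw [abs_of_neg h] at hj
      rw [trunc_of_lt (by omega), sgnZ, if_neg (not_le.mpr h)]

lemma energy_trunc_le (F : ℝ → ℝ) (β : ℝ)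
    (hF1 : F 1 = 0) (hFm1 : F (-1) = 0) {u : ℤ → ℝ} (hu : IsM u) (N : ℕ) :
    energy F β (trunc N u) ≤
      energy F β u + ENNReal.ofReal β * (2 * ENNReal.ofReal ((1 - u N) ^ 2)) := by
  obtain ⟨hodd, hmono, hbd⟩ := hu
  set w := trunc N u with hw
  have hFsum : (∑' j : ℤ, ENNReal.ofReal (F (w j))) ≤ ∑' j : ℤ, ENNReal.ofReal (F (u j)) := by
    refine ENNReal.tsum_le_tsum fun j => ?_
    rcases lt_or_ge j (-(N:ℤ)) with h | h
    · rw [hw, trunc_of_lt h, hFm1]; simp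
    · rcases lt_or_ge (N:ℤ) j with h2 | h2
      · rw [hw, trunc_of_gt h2, hF1]; simp
      · rw [hw, trunc_of_mem h h2]
  -- pointwise bound for the difference terms
  set g : ℤ → ℝ≥0∞ := fun j =>
    if j = (N:ℤ) ∨ j = -(N:ℤ)-1 then ENNReal.ofReal ((1 - u N) ^ 2) else 0 with hg
  have hdiff : ∀ j : ℤ, ENNReal.ofReal ((w (j+1) - w j) ^ 2) ≤
      ENNReal.ofReal ((u (j+1) - u j) ^ 2) + g j := by
    intro j
    rcases lt_or_ge j (-(N:ℤ)-1) with h | h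
    · rw [hw, trunc_of_lt (by omega), trunc_of_lt (by omega)]
      simp
    · rcases eq_or_lt_of_le h with h | h
      · -- j = -N-1
        have hj : j = -(N:ℤ)-1 := h.symm
        have hwj : w j = -1 := by rw [hw, trunc_of_lt (by omega)]
        have hwj1 : w (j+1) = u (-(N:ℤ)) := by
          rw [hw, hj]; rw [show -(N:ℤ)-1+1 = -(N:ℤ) by ring, trunc_of_mem le_rfl (by omega)]
        have : (w (j+1) - w j) ^ 2 = (1 - u N) ^ 2 := by
          rw [hwj, hwj1, hodd]; ring
        rw [this]
        have : g j = ENNReal.ofReal ((1 - u (N:ℤ)) ^ 2) := by rw [hg]; simp [hj]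
        rw [this]
        exact le_add_self
      · rcases lt_or_ge j (N:ℤ) with h2 | h2
        · -- -N ≤ j ≤ N-1
          rw [hw, trunc_of_mem (by omega) (by omega), trunc_of_mem (by omega) (by omega)]
          exact le_add_right le_rfl
        · rcases eq_or_lt_of_le h2 with h3 | h3
          · -- j = N
            have hwj : w j = u N := by rw [hw, ← h3, trunc_of_mem (by omega) (by omega)]
            have hwj1 : w (j+1) = 1 := by rw [hw, trunc_of_gt (by omega)]
            have : (w (j+1) - w j) ^ 2 = (1 - u N) ^ 2 := by rw [hwj, hwj1]
            rw [this]
            have : g j = ENNReal.ofReal ((1 - u (N:ℤ)) ^ 2) := by rw [hg]; simp [← h3]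
            rw [this]
            exact le_add_self
          · -- j > N
            rw [hw, trunc_of_gt (by omega), trunc_of_gt (by omega)]
            simp
  have hgsum : (∑' j : ℤ, g j) = 2 * ENNReal.ofReal ((1 - u N) ^ 2) := by
    have hne : (N:ℤ) ≠ -(N:ℤ)-1 := by omega
    have : (∑' j : ℤ, g j) = ∑ j ∈ ({(N:ℤ), -(N:ℤ)-1} : Finset ℤ), g j := by
      refine tsum_eq_sum fun j hj => ?_
      simp only [Finset.mem_insert, Finset.mem_singleton] at hj
      rw [hg]; simp only []
      rw [if_neg (by tauto)]
    rw [this, Finset.sum_pair hne]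
    have e1 : g (N:ℤ) = ENNReal.ofReal ((1 - u (N:ℤ)) ^ 2) := by rw [hg]; simp
    have e2 : g (-(N:ℤ)-1) = ENNReal.ofReal ((1 - u (N:ℤ)) ^ 2) := by rw [hg]; simp
    rw [e1, e2, two_mul]
  have hDsum : (∑' j : ℤ, ENNReal.ofReal ((w (j+1) - w j) ^ 2)) ≤
      (∑' j : ℤ, ENNReal.ofReal ((u (j+1) - u j) ^ 2)) + 2 * ENNReal.ofReal ((1 - u N) ^ 2) := by
    calc (∑' j : ℤ, ENNReal.ofReal ((w (j+1) - w j) ^ 2))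
        ≤ ∑' j : ℤ, (ENNReal.ofReal ((u (j+1) - u j) ^ 2) + g j) :=
          ENNReal.tsum_le_tsum hdiff
      _ = (∑' j : ℤ, ENNReal.ofReal ((u (j+1) - u j) ^ 2)) + ∑' j : ℤ, g j :=
          ENNReal.tsum_add
      _ = _ := by rw [hgsum]
  calc energy F β w ≤ (∑' j : ℤ, ENNReal.ofReal (F (u j))) +
        ENNReal.ofReal β * ((∑' j : ℤ, ENNReal.ofReal ((u (j+1) - u j) ^ 2)) +
          2 * ENNReal.ofReal ((1 - u N) ^ 2)) := by
        exact add_le_add hFsum (mul_le_mul_right hDsum _)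
    _ = energy F β u + ENNReal.ofReal β * (2 * ENNReal.ofReal ((1 - u N) ^ 2)) := by
        rw [energy, mul_add, add_assoc]

lemma tendsto_one_of_energy_ne_top (F : ℝ → ℝ) (β : ℝ)
    (hFcont : ContinuousOn F (Set.Icc (-1 : ℝ) 1))
    (hFpos : ∀ η ∈ Set.Ioo (-1 : ℝ) 1, 0 < F η)
    {u : ℤ → ℝ} (hu : IsM u) (hfin : energy F β u ≠ ⊤) :
    Tendsto (fun N : ℕ => u N) atTop (nhds 1) := by
  obtain ⟨hodd, hmono, hbd⟩ := hu
  have hu0 : u 0 = 0 := by have := hodd 0; simp at this; linarith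
  have hmonoN : Monotone fun n : ℕ => u n := fun a b h => hmono (by exact_mod_cast h)
  have hbdd : BddAbove (Set.range fun n : ℕ => u n) := by
    refine ⟨1, ?_⟩
    rintro x ⟨n, rfl⟩
    exact (hbd n).2
  set L := ⨆ n : ℕ, u n with hL
  have htend : Tendsto (fun n : ℕ => u n) atTop (nhds L) :=
    tendsto_atTop_ciSup hmonoN hbdd
  have hL1 : L ≤ 1 := ciSup_le fun n => (hbd n).2
  have hL0 : 0 ≤ L := by
    have := le_ciSup hbdd 0
    simpa [hu0] using this
  have hLeq : L = 1 := by
    by_contra hne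
    have hLlt : L < 1 := lt_of_le_of_ne hL1 hne
    -- F has a positive minimum on [0, L]
    have hsub : Set.Icc (0:ℝ) L ⊆ Set.Icc (-1:ℝ) 1 :=
      Set.Icc_subset_Icc (by norm_num) hL1
    obtain ⟨x, hx, hxmin⟩ := (isCompact_Icc (a := (0:ℝ)) (b := L)).exists_isMinOn
      (Set.nonempty_Icc.mpr hL0) (hFcont.mono hsub)
    have hm : 0 < F x := hFpos x ⟨by linarith [hx.1], lt_of_le_of_lt hx.2 hLlt⟩
    have hterm : ∀ n : ℕ, ENNReal.ofReal (F x) ≤ ENNReal.ofReal (F (u n)) := by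
      intro n
      refine ENNReal.ofReal_le_ofReal ?_
      have hun : u n ∈ Set.Icc (0:ℝ) L := ⟨hu0 ▸ hmono (by exact_mod_cast Nat.zero_le n : (0:ℤ) ≤ n), le_ciSup hbdd n⟩
      exact hxmin hun
    have htop : (∑' j : ℤ, ENNReal.ofReal (F (u j))) = ⊤ := by
      refine top_le_iff.mp ?_
      calc (⊤ : ℝ≥0∞) = ∑' _ : ℕ, ENNReal.ofReal (F x) :=
            (ENNReal.tsum_const_eq_top_of_ne_zero
              (by simp [ENNReal.ofReal_eq_zero, not_le, hm])).symm
        _ ≤ ∑' n : ℕ, ENNReal.ofReal (F (u n)) := ENNReal.tsum_le_tsum hterm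
        _ ≤ ∑' j : ℤ, ENNReal.ofReal (F (u j)) :=
            ENNReal.tsum_comp_le_tsum_of_injective (fun a b => by exact_mod_cast id) _
    exact hfin (by rw [energy, htop, top_add])
  rwa [hLeq] at htend

/-- convergence and monotonicity of the Ritz minimal energies. -/
theorem stmt10 (F : ℝ → ℝ) (β : ℝ) (hβ : 0 < β)
    (hFcont : ContinuousOn F (Set.Icc (-1 : ℝ) 1))
    (hFnonneg : ∀ η ∈ Set.Icc (-1 : ℝ) 1, 0 ≤ F η)
    (hFpos : ∀ η ∈ Set.Ioo (-1 : ℝ) 1, 0 < F η)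
    (hF1 : F 1 = 0) (hFm1 : F (-1) = 0) :
    Tendsto (fun N : ℕ => ⨅ (u : ℤ → ℝ) (_ : IsMN N u), energy F β u) atTop
        (nhds (⨅ (u : ℤ → ℝ) (_ : IsM u), energy F β u)) ∧
      Antitone (fun N : ℕ => ⨅ (u : ℤ → ℝ) (_ : IsMN N u), energy F β u) := by
  set eN : ℕ → ℝ≥0∞ := fun N => ⨅ (u : ℤ → ℝ) (_ : IsMN N u), energy F β u with heN
  set e : ℝ≥0∞ := ⨅ (u : ℤ → ℝ) (_ : IsM u), energy F β u with he
  have hanti : Antitone eN := by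
    intro a b hab
    refine le_iInf₂ fun u hu => iInf₂_le u ?_
    exact ⟨hu.1, fun j hj => hu.2 j (lt_of_le_of_lt (by exact_mod_cast hab) hj)⟩
  have hkey : ∀ u : ℤ → ℝ, IsM u → energy F β u ≠ ⊤ → (⨅ N, eN N) ≤ energy F β u := by
    intro u hu hfin
    have htend1 : Tendsto (fun N : ℕ => u N) atTop (nhds 1) :=
      tendsto_one_of_energy_ne_top F β hFcont hFpos hu hfin
    have hbnd : ∀ N : ℕ, (⨅ N, eN N) ≤
        energy F β u + ENNReal.ofReal β * (2 * ENNReal.ofReal ((1 - u N) ^ 2)) := by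
      intro N
      refine (iInf_le eN N).trans ?_
      refine (iInf₂_le (trunc N u) (isMN_trunc hu)).trans ?_
      exact energy_trunc_le F β hF1 hFm1 hu N
    have htend2 : Tendsto
        (fun N : ℕ => energy F β u + ENNReal.ofReal β * (2 * ENNReal.ofReal ((1 - u N) ^ 2)))
        atTop (nhds (energy F β u)) := by
      have h1 : Tendsto (fun N : ℕ => (1 - u N) ^ 2) atTop (nhds 0) := by
        have := htend1.const_sub 1
        simpa using this.pow 2
      have h2 : Tendsto (fun N : ℕ => ENNReal.ofReal ((1 - u N) ^ 2)) atTop (nhds 0) := by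
        have := (ENNReal.continuous_ofReal.tendsto 0).comp h1
        simpa [Function.comp_def] using this
      have h3 : Tendsto
          (fun N : ℕ => ENNReal.ofReal β * (2 * ENNReal.ofReal ((1 - u N) ^ 2)))
          atTop (nhds 0) := by
        have ha := ENNReal.Tendsto.const_mul (a := (2:ℝ≥0∞)) h2
          (Or.inr (by norm_num))
        have hb := ENNReal.Tendsto.const_mul (a := ENNReal.ofReal β) (by simpa using ha)
          (Or.inr ENNReal.ofReal_ne_top)
        simpa using hb
      have := h3.const_add (energy F β u)
      simpa using this
    exact ge_of_tendsto' htend2 hbnd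
  have hinf : (⨅ N, eN N) = e := by
    refine le_antisymm ?_ ?_
    · refine le_iInf₂ fun u hu => ?_
      rcases eq_or_ne (energy F β u) ⊤ with h | h
      · rw [h]; exact le_top
      · exact hkey u hu h
    · exact le_iInf fun N => le_iInf₂ fun u hu => iInf₂_le u hu.1
  refine ⟨?_, hanti⟩
  rw [← hinf]
  exact tendsto_atTop_iInf hanti
end
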